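/- arXiv:2505.13986 — 7 statements merged into one kernel-verified Lean document; each statement's English description precedes it below -/
import Mathlib

section
/- Let N ≥ 1 be an integer. Define g : {1,...,N} → ℝ by g(k) = 1 − cos(2π⌊k/2⌋/N). Then (i) g is monotone nondecreasing on {1,...,N}, and (ii) the multiset {g(k) : 1 ≤ k ≤ N} equals the multiset {1 − cos(2πj/N) : 0 ≤ j ≤ N−1}. In other words, listing the N values 1 − cos(2πj/N), j = 0,...,N−1, in nondecreasing order, the k-th element is 1 − cos(2π⌊k/2⌋/N). -/
open Real

private def cycF (N k : ℕ) : ℕ :=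
  if k = 1 then 0 else if k % 2 = 0 then k / 2 else N - k / 2

private lemma cycF_injOn (N : ℕ) : Set.InjOn (cycF N) ↑(Finset.Icc 1 N) := by
  intro a ha b hb hab
  simp only [Finset.coe_Icc, Set.mem_Icc] at ha hb
  unfold cycF at hab
  split_ifs at hab <;> omega

private lemma cycF_image (N : ℕ) (hN : 1 ≤ N) :
    (Finset.Icc 1 N).image (cycF N) = Finset.range N := by
  apply Finset.eq_of_subset_of_card_le
  · intro x hx
    simp only [Finset.mem_image, Finset.mem_Icc] at hx
    obtain ⟨k, hk, rfl⟩ := hx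
    simp only [Finset.mem_range]
    unfold cycF
    split_ifs <;> omega
  · rw [Finset.card_image_of_injOn (cycF_injOn N), Nat.card_Icc, Finset.card_range]
    omega

private lemma cycF_val (N k : ℕ) (hN : 1 ≤ N) (hk : k ∈ Finset.Icc 1 N) :
    Real.cos (2 * Real.pi * ((cycF N k : ℕ) : ℝ) / (N : ℝ))
      = Real.cos (2 * Real.pi * ((k / 2 : ℕ) : ℝ) / (N : ℝ)) := by
  simp only [Finset.mem_Icc] at hk
  unfold cycF
  split_ifs with h1 h2
  · subst h1; norm_num
  · rfl
  · -- k odd, k ≠ 1, so k ≥ 3, k/2 ≥ 1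
    have hm : k / 2 ≤ N := by omega
    have hN0 : (N : ℝ) ≠ 0 := by positivity
    have harg : 2 * Real.pi * ((N - k / 2 : ℕ) : ℝ) / (N : ℝ)
        = 2 * Real.pi - 2 * Real.pi * ((k / 2 : ℕ) : ℝ) / (N : ℝ) := by
      rw [Nat.cast_sub hm]
      field_simp
    rw [harg, Real.cos_two_pi_sub]

/-- For `N ≥ 1`, the function `g k = 1 - cos (2π⌊k/2⌋/N)` is monotone
nondecreasing on `{1, ..., N}`, and the multiset of its values on `{1, ..., N}` equals the
multiset of the values `1 - cos (2πj/N)` for `0 ≤ j ≤ N - 1`.  In other words, listing the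
`N` numbers `1 - cos (2πj/N)`, `j = 0, ..., N-1`, in nondecreasing order, the `k`-th element
is `1 - cos (2π⌊k/2⌋/N)`. -/
theorem cycle_eigenvalues_sorted (N : ℕ) (hN : 1 ≤ N) :
    MonotoneOn (fun k : ℕ => 1 - Real.cos (2 * Real.pi * ((k / 2 : ℕ) : ℝ) / (N : ℝ)))
      (Set.Icc 1 N) ∧
    (Finset.Icc 1 N).val.map
        (fun k : ℕ => 1 - Real.cos (2 * Real.pi * ((k / 2 : ℕ) : ℝ) / (N : ℝ)))
      = (Finset.range N).val.map
        (fun j : ℕ => 1 - Real.cos (2 * Real.pi * (j : ℝ) / (N : ℝ))) := by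
  have hNpos : (0 : ℝ) < N := by exact_mod_cast hN
  constructor
  · intro a ha b hb hab
    simp only
    have h1 : Real.cos (2 * Real.pi * ((b / 2 : ℕ) : ℝ) / (N : ℝ))
        ≤ Real.cos (2 * Real.pi * ((a / 2 : ℕ) : ℝ) / (N : ℝ)) := by
      apply Real.cos_le_cos_of_nonneg_of_le_pi
      · positivity
      · rw [div_le_iff₀ hNpos]
        have : (2 * (b / 2) : ℕ) ≤ N := by
          have := hb.2
          omega
        have h2 : ((b / 2 : ℕ) : ℝ) * 2 ≤ (N : ℝ) := by
          exact_mod_cast (by omega : (b / 2) * 2 ≤ N)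
        nlinarith [Real.pi_pos]
      · have h3 : ((a / 2 : ℕ) : ℝ) ≤ ((b / 2 : ℕ) : ℝ) := by
          exact_mod_cast Nat.div_le_div_right hab
        gcongr
    linarith
  · have himg := cycF_image N hN
    have hval : (Finset.range N).val = (Finset.Icc 1 N).val.map (cycF N) := by
      rw [← himg, Finset.image_val_of_injOn (cycF_injOn N)]
    rw [hval, Multiset.map_map]
    apply Multiset.map_congr rfl
    intro k hk
    simp only [Function.comp_apply]
    rw [cycF_val N k hN (by exact hk)]
end

section
/- For all natural numbers k and N with 2 ≤ k ≤ N, one has √(1 − cos(2π·⌊k/2⌋/N)) ≥ (√2/4)·(1/⌊N/k⌋), where ⌊k/2⌋ and ⌊N/k⌋ denote integer division and all quantities are real numbers. -/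
/-- For natural numbers `2 ≤ k ≤ N`,
`√(1 − cos(2π⌊k/2⌋/N)) ≥ (√2/4)·(1/⌊N/k⌋)`, where `⌊k/2⌋` and `⌊N/k⌋` are integer
divisions and all quantities are real numbers. -/
theorem sqrt_cycle_eigenvalue_ge (k N : ℕ) (hk : 2 ≤ k) (hkN : k ≤ N) :
    Real.sqrt (1 - Real.cos (2 * Real.pi * ((k / 2 : ℕ) : ℝ) / (N : ℝ)))
      ≥ (Real.sqrt 2 / 4) * (1 / ((N / k : ℕ) : ℝ)) := by
  set m := k / 2 with hm
  set q := N / k with hq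
  have hm1 : 1 ≤ m := by omega
  have hk0 : 0 < k := by omega
  have hq1 : 1 ≤ q := (Nat.one_le_div_iff hk0).mpr hkN
  have hkm : k ≤ 2 * m + 1 := by omega
  have hNq : N < k * q + k := by
    simp only [hq]
    have h2 := Nat.div_add_mod N k
    have := Nat.mod_lt N hk0
    omega
  have key : N ≤ 8 * m * q := by nlinarith
  have hN0 : (0 : ℝ) < N := by exact_mod_cast by omega
  have hmN : (2 : ℝ) * m ≤ N := by
    have : 2 * m ≤ N := by omega
    exact_mod_cast this
  have hm0 : (0 : ℝ) < m := by exact_mod_cast hm1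
  have hq0 : (0 : ℝ) < q := by exact_mod_cast hq1
  set x : ℝ := Real.pi * m / N with hx
  have hx0 : 0 ≤ x := by positivity
  have hxpi : x ≤ Real.pi / 2 := by
    rw [hx, div_le_div_iff₀ hN0 two_pos]
    nlinarith [Real.pi_pos]
  have harg : 2 * Real.pi * ((m : ℕ) : ℝ) / (N : ℝ) = 2 * x := by
    rw [hx]; ring
  rw [harg]
  have hcos : 1 - Real.cos (2 * x) = 2 * Real.sin x ^ 2 := by
    rw [Real.cos_two_mul, Real.sin_sq]; ring
  have hsin0 : 0 ≤ Real.sin x :=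
    Real.sin_nonneg_of_nonneg_of_le_pi hx0 (by linarith [Real.pi_pos])
  have hsqrt : Real.sqrt (1 - Real.cos (2 * x)) = Real.sqrt 2 * Real.sin x := by
    rw [hcos, Real.sqrt_mul (by norm_num), Real.sqrt_sq hsin0]
  rw [hsqrt]
  have hjordan : 2 / Real.pi * x ≤ Real.sin x := Real.mul_le_sin hx0 hxpi
  have hxval : 2 / Real.pi * x = 2 * m / N := by
    rw [hx]; field_simp
  rw [hxval] at hjordan
  have h2 : (1 : ℝ) / (4 * q) ≤ 2 * m / N := by
    rw [div_le_div_iff₀ (by positivity) hN0]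
    have : (N : ℝ) ≤ 8 * m * q := by exact_mod_cast key
    nlinarith
  have hs2 : (0 : ℝ) < Real.sqrt 2 := Real.sqrt_pos.mpr (by norm_num)
  have : Real.sqrt 2 / 4 * (1 / q) = Real.sqrt 2 * (1 / (4 * q)) := by ring
  rw [ge_iff_le, this]
  calc Real.sqrt 2 * (1 / (4 * q)) ≤ Real.sqrt 2 * (2 * m / N) := by
        exact mul_le_mul_of_nonneg_left h2 hs2.le
    _ ≤ Real.sqrt 2 * Real.sin x := mul_le_mul_of_nonneg_left hjordan hs2.le
end

section
/- For all natural numbers k and r with 2 ≤ k ≤ r, one has √(1 − cos(π(k−1)/(r−1))) ≥ (√2/2)·(1/(2⌊r/k⌋)), where ⌊r/k⌋ denotes integer division of r by k and all quantities are real numbers. -/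
/-- For natural numbers `2 ≤ k ≤ r`,
`√(1 − cos(π(k−1)/(r−1))) ≥ (√2/2)·(1/(2⌊r/k⌋))`, where `⌊r/k⌋` is integer division and
`cos` is the real cosine. -/
theorem sqrt_path_eigenvalue_ge (k r : ℕ) (hk : 2 ≤ k) (hkr : k ≤ r) :
    Real.sqrt (1 - Real.cos (Real.pi * ((k : ℝ) - 1) / ((r : ℝ) - 1)))
      ≥ (Real.sqrt 2 / 2) * (1 / (2 * ((r / k : ℕ) : ℝ))) := by
  set q : ℕ := r / k with hq
  have hq1 : 1 ≤ q := (Nat.one_le_div_iff (by omega)).mpr hkr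
  -- key natural number inequality: 4 q (k-1) ≥ r - 1
  have hnat : r - 1 ≤ 4 * q * (k - 1) := by
    have hdm := Nat.div_add_mod r k
    have hmod : r % k < k := Nat.mod_lt _ (by omega)
    set m := r % k
    have hr : r = k * q + m := hdm.symm
    have h1 : 1 ≤ q := hq1
    nlinarith [Nat.sub_add_cancel (show 1 ≤ k by omega), Nat.sub_add_cancel (show 1 ≤ r by omega),
      (q - 1) * (3 * k - 4), Nat.mul_le_mul_left q (show 4 ≤ 3 * k + 2 by omega)]
  have hrR : (2:ℝ) ≤ r := by exact_mod_cast hk.trans hkr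
  have hr1 : (0:ℝ) < (r:ℝ) - 1 := by linarith
  have hkR : (2:ℝ) ≤ k := by exact_mod_cast hk
  have hqR : (1:ℝ) ≤ (q:ℝ) := by exact_mod_cast hq1
  set x : ℝ := ((k:ℝ) - 1) / ((r:ℝ) - 1) with hxdef
  have hx0 : 0 ≤ x := div_nonneg (by linarith) hr1.le
  have hx1 : x ≤ 1 := by
    rw [div_le_one hr1]
    have : (k:ℝ) ≤ r := by exact_mod_cast hkr
    linarith
  have hpi : Real.pi > 0 := Real.pi_pos
  have harg : Real.pi * ((k : ℝ) - 1) / ((r : ℝ) - 1) = Real.pi * x := by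
    rw [hxdef]; ring
  have habs : |Real.pi * x| ≤ Real.pi := by
    rw [abs_of_nonneg (by positivity)]
    nlinarith
  have hcos := Real.cos_le_one_sub_mul_cos_sq habs
  have hlb : 2 * x ^ 2 ≤ 1 - Real.cos (Real.pi * x) := by
    have hpi2 : Real.pi ^ 2 > 0 := by positivity
    have : 2 / Real.pi ^ 2 * (Real.pi * x) ^ 2 = 2 * x ^ 2 := by
      field_simp
    linarith [hcos, this ▸ hcos]
  have hsqrt : Real.sqrt (1 - Real.cos (Real.pi * x)) ≥ Real.sqrt 2 * x := by
    have : Real.sqrt (2 * x ^ 2) = Real.sqrt 2 * x := by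
      rw [Real.sqrt_mul (by norm_num), Real.sqrt_sq hx0]
    calc Real.sqrt (1 - Real.cos (Real.pi * x)) ≥ Real.sqrt (2 * x ^ 2) :=
          Real.sqrt_le_sqrt hlb
      _ = Real.sqrt 2 * x := this
  rw [harg]
  refine le_trans ?_ hsqrt
  have hx_ge : 1 / (4 * (q:ℝ)) ≤ x := by
    rw [hxdef, div_le_div_iff₀ (by positivity) hr1]
    have hnatR : (r:ℝ) - 1 ≤ 4 * (q:ℝ) * ((k:ℝ) - 1) := by
      have := hnat
      have h1 : ((r - 1 : ℕ) : ℝ) ≤ ((4 * q * (k - 1) : ℕ) : ℝ) := by exact_mod_cast this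
      push_cast [Nat.cast_sub (show 1 ≤ r by omega), Nat.cast_sub (show 1 ≤ k by omega)] at h1
      linarith
    linarith [hnatR]
  have h2 : (0:ℝ) ≤ Real.sqrt 2 := Real.sqrt_nonneg 2
  have : Real.sqrt 2 / 2 * (1 / (2 * (q:ℝ))) = Real.sqrt 2 * (1 / (4 * (q:ℝ))) := by
    field_simp; ring
  rw [this]
  exact mul_le_mul_of_nonneg_left hx_ge h2
end

section
/- Let N ≥ 3, r ≥ 2 be integers and let G_{N,r} be the spider web graph. For an integer m with 1 ≤ m < r, let S = (ZMod N) × {j ∈ Fin r : j < m} (the m innermost rings, containing one path endpoint). Then Cut(S) = N and Volume(S) = N(4m−1). -/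
/-- The spider web graph `G_{N,r}`: the simple graph on vertex set `ZMod N × Fin r` in which
`(i,j)` and `(i',j')` are adjacent iff (`j = j'` and `i' = i ± 1 mod N`) or (`i = i'` and
`|j - j'| = 1`); realized as the box (Cartesian) product of the cycle graph on `ZMod N`
(the circulant graph with jump `1`) with the path graph on `Fin r`. -/
def spiderWeb (N r : ℕ) : SimpleGraph (ZMod N × Fin r) :=
  SimpleGraph.boxProd (SimpleGraph.circulantGraph {(1 : ZMod N)}) (SimpleGraph.pathGraph r)

/-- `cut G S`: the number of edges of `G` with exactly one endpoint in `S`, counted as the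
number of ordered pairs `(u, v)` with `u ∈ S`, `v ∉ S` and `u ~ v` (each such edge is counted
exactly once this way). -/
noncomputable def cut {V : Type*} (G : SimpleGraph V) (S : Set V) : ℕ :=
  Set.ncard {p : V × V | p.1 ∈ S ∧ p.2 ∉ S ∧ G.Adj p.1 p.2}

/-- `volume G S`: the sum of the degrees of the vertices in `S`, counted as the number of
ordered pairs `(u, v)` with `u ∈ S` and `u ~ v`. -/
noncomputable def volume {V : Type*} (G : SimpleGraph V) (S : Set V) : ℕ :=
  Set.ncard {p : V × V | p.1 ∈ S ∧ G.Adj p.1 p.2}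

/-- `I ⊆ ZMod N` is an arc of cardinality `c`: `I = {a, a+1, ..., a+c-1}` (mod `N`). -/
def IsArc (N : ℕ) (I : Set (ZMod N)) (c : ℕ) : Prop :=
  ∃ a : ZMod N, I = (fun t : ℕ => a + (t : ZMod N)) '' Set.Iio c


open SimpleGraph Finset


instance swPathDec (r : ℕ) : DecidableRel (pathGraph r).Adj :=
  fun _ _ => decidable_of_iff _ pathGraph_adj.symm

instance swCircDec (N : ℕ) : DecidableRel (circulantGraph {(1 : ZMod N)}).Adj :=
  fun a b => decidable_of_iff (a ≠ b ∧ (a - b = 1 ∨ b - a = 1))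
    (by simp [circulantGraph, fromRel_adj])

lemma circ_adj_iff {N : ℕ} [NeZero N] (hN : 3 ≤ N) (i i' : ZMod N) :
    (circulantGraph {(1 : ZMod N)}).Adj i i' ↔ i' = i - 1 ∨ i' = i + 1 := by
  haveI : Fact (1 < N) := ⟨by omega⟩
  simp only [circulantGraph, fromRel_adj, Set.mem_singleton_iff]
  constructor
  · rintro ⟨hne, h | h⟩
    · exact Or.inl (by linear_combination -h)
    · exact Or.inr (by linear_combination h)
  · rintro (rfl | rfl)
    · exact ⟨fun h => one_ne_zero (α := ZMod N) (by linear_combination h), Or.inl (by ring)⟩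
    · exact ⟨fun h => one_ne_zero (α := ZMod N) (by linear_combination -h), Or.inr (by ring)⟩

lemma sw_two_ne_zero {N : ℕ} [NeZero N] (hN : 3 ≤ N) : (2 : ZMod N) ≠ 0 := by
  intro h
  have h2 : ((2 : ℕ) : ZMod N) = 0 := by push_cast; exact h
  rw [ZMod.natCast_eq_zero_iff] at h2
  have := Nat.le_of_dvd (by norm_num) h2
  omega

lemma circ_count {N : ℕ} [NeZero N] (hN : 3 ≤ N) (i : ZMod N) :
    ∑ i' : ZMod N, (if (circulantGraph {(1 : ZMod N)}).Adj i i' then (1:ℕ) else 0) = 2 := by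
  rw [← Finset.card_filter]
  have h : Finset.univ.filter (fun i' => (circulantGraph {(1 : ZMod N)}).Adj i i')
      = {i - 1, i + 1} := by
    ext i'
    rw [Finset.mem_filter, circ_adj_iff hN]
    simp
  rw [h]
  refine Finset.card_pair ?_
  intro h2
  exact sw_two_ne_zero hN (by linear_combination -h2)

lemma path_count {r : ℕ} (j : Fin r) (hj : (j : ℕ) + 1 < r) :
    ∑ j' : Fin r, (if (pathGraph r).Adj j j' then (1:ℕ) else 0)
      = if (j : ℕ) = 0 then 1 else 2 := by
  rw [← Finset.card_filter]
  by_cases h0 : (j : ℕ) = 0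
  · have h : Finset.univ.filter (fun j' => (pathGraph r).Adj j j') = {(⟨1, by omega⟩ : Fin r)} := by
      ext j'
      simp only [Finset.mem_filter, Finset.mem_univ, true_and, pathGraph_adj,
        Finset.mem_singleton, Fin.ext_iff]
      omega
    rw [h, if_pos h0]
    simp
  · have h : Finset.univ.filter (fun j' => (pathGraph r).Adj j j')
        = {(⟨(j : ℕ) - 1, by omega⟩ : Fin r), ⟨(j : ℕ) + 1, hj⟩} := by
      ext j'
      simp only [Finset.mem_filter, Finset.mem_univ, true_and, pathGraph_adj,
        Finset.mem_insert, Finset.mem_singleton, Fin.ext_iff]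
      omega
    rw [h, if_neg h0]
    refine Finset.card_pair ?_
    simp only [ne_eq, Fin.mk.injEq]
    omega


instance swDec (N r : ℕ) : DecidableRel (spiderWeb N r).Adj :=
  fun _ _ => decidable_of_iff _ boxProd_adj.symm

/-- For `N ≥ 3`, `r ≥ 2` and `1 ≤ m < r`, the set
`S = ZMod N × {j : Fin r | j < m}` of the `m` innermost rings (containing one path endpoint)
of the spider web graph `G_{N,r}` satisfies `Cut(S) = N` and `Volume(S) = N(4m − 1)`. -/
theorem spiderWeb_innerRings_cut_volume (N r m : ℕ) (hN : 3 ≤ N) (hr : 2 ≤ r)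
    (hm1 : 1 ≤ m) (hmr : m < r) :
    cut (spiderWeb N r) ((Set.univ : Set (ZMod N)) ×ˢ {j : Fin r | (j : ℕ) < m}) = N ∧
    volume (spiderWeb N r) ((Set.univ : Set (ZMod N)) ×ˢ {j : Fin r | (j : ℕ) < m})
      = N * (4 * m - 1) := by
  haveI : NeZero N := ⟨by omega⟩
  have hmemS : ∀ p : ZMod N × Fin r,
      p ∈ ((Set.univ : Set (ZMod N)) ×ˢ {j : Fin r | (j : ℕ) < m}) ↔ (p.2 : ℕ) < m := by
    intro p
    rw [Set.mem_prod]
    simp only [Set.mem_univ, true_and, Set.mem_setOf_eq]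
  haveI hSdec : DecidablePred (· ∈ ((Set.univ : Set (ZMod N)) ×ˢ {j : Fin r | (j : ℕ) < m})) :=
    fun p => decidable_of_iff _ (hmemS p).symm
  have hadj : ∀ (i i' : ZMod N) (j j' : Fin r),
      (spiderWeb N r).Adj (i, j) (i', j') ↔
        ((circulantGraph {(1 : ZMod N)}).Adj i i' ∧ j = j') ∨
          (i = i' ∧ (pathGraph r).Adj j j') := by
    intro i i' j j'
    rw [spiderWeb, boxProd_adj]
    dsimp only
    tauto
  constructor
  · -- cut
    have hset : {p : (ZMod N × Fin r) × (ZMod N × Fin r) |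
          p.1 ∈ ((Set.univ : Set (ZMod N)) ×ˢ {j : Fin r | (j : ℕ) < m}) ∧
          p.2 ∉ ((Set.univ : Set (ZMod N)) ×ˢ {j : Fin r | (j : ℕ) < m}) ∧
          (spiderWeb N r).Adj p.1 p.2}
        = (fun i : ZMod N => ((i, (⟨m - 1, by omega⟩ : Fin r)),
            (i, (⟨m, hmr⟩ : Fin r)))) '' Set.univ := by
      ext ⟨⟨i, j⟩, ⟨i', j'⟩⟩
      simp only [Set.mem_setOf_eq, Set.image_univ, Set.mem_range, Prod.mk.injEq]
      rw [hmemS, hmemS, hadj]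
      constructor
      · rintro ⟨hj, hj', hA⟩
        replace hj : (j : ℕ) < m := hj
        replace hj' : ¬(j' : ℕ) < m := hj'
        rcases hA with ⟨-, h2⟩ | ⟨rfl, hp⟩
        · replace h2 : j = j' := h2
          exact absurd (h2 ▸ hj) hj'
        · replace hp : (pathGraph r).Adj j j' := hp
          rw [pathGraph_adj] at hp
          exact ⟨i, ⟨rfl, Fin.ext (show m - 1 = (j : ℕ) by omega)⟩,
            rfl, Fin.ext (show m = (j' : ℕ) by omega)⟩
      · rintro ⟨a, ⟨rfl, h1⟩, rfl, h2⟩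
        have hv1 : (j : ℕ) = m - 1 := by rw [← h1]
        have hv2 : (j' : ℕ) = m := by rw [← h2]
        refine ⟨show (j : ℕ) < m by omega, show ¬(j' : ℕ) < m by omega,
          Or.inr ⟨rfl, ?_⟩⟩
        rw [pathGraph_adj]
        omega
    rw [cut, hset, Set.ncard_image_of_injective _ (fun a b h => by
      simpa using congrArg (fun p => p.1.1) h), Set.ncard_univ, Nat.card_zmod]
  · -- volume
    have step : ∀ u : ZMod N × Fin r,
        (∑ v : ZMod N × Fin r,
          if u ∈ ((Set.univ : Set (ZMod N)) ×ˢ {j : Fin r | (j : ℕ) < m}) ∧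
            (spiderWeb N r).Adj u v then (1:ℕ) else 0)
        = if (u.2 : ℕ) < m then (if (u.2 : ℕ) = 0 then 3 else 4) else 0 := by
      rintro ⟨i, j⟩
      by_cases hj : (j : ℕ) < m
      · rw [if_pos hj]
        have hmem : ((i, j) : ZMod N × Fin r)
            ∈ ((Set.univ : Set (ZMod N)) ×ˢ {j : Fin r | (j : ℕ) < m}) := (hmemS _).2 hj
        rw [Finset.sum_congr rfl (fun v _ => if_congr (and_iff_right hmem) rfl rfl),
          Fintype.sum_prod_type]
        have hsplit : ∀ (i' : ZMod N) (j' : Fin r),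
            (if (spiderWeb N r).Adj (i, j) (i', j') then (1:ℕ) else 0)
            = (if (circulantGraph {(1 : ZMod N)}).Adj i i' ∧ j = j' then 1 else 0)
              + (if i = i' ∧ (pathGraph r).Adj j j' then 1 else 0) := by
          intro i' j'
          by_cases h1 : (circulantGraph {(1 : ZMod N)}).Adj i i' ∧ j = j'
          · have h2 : ¬(i = i' ∧ (pathGraph r).Adj j j') := fun h => h1.1.ne h.1
            rw [if_pos ((hadj i i' j j').2 (Or.inl h1)), if_pos h1, if_neg h2]
          · by_cases h2 : i = i' ∧ (pathGraph r).Adj j j'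
            · rw [if_pos ((hadj i i' j j').2 (Or.inr h2)), if_neg h1, if_pos h2]
            · rw [if_neg (fun h => by rcases (hadj i i' j j').1 h with h' | h' <;> tauto),
                if_neg h1, if_neg h2]
        simp only [hsplit, Finset.sum_add_distrib]
        have hA : (∑ i' : ZMod N, ∑ j' : Fin r,
            if (circulantGraph {(1 : ZMod N)}).Adj i i' ∧ j = j' then (1:ℕ) else 0) = 2 := by
          rw [← circ_count hN i]
          refine Finset.sum_congr rfl fun i' _ => ?_
          by_cases h1 : (circulantGraph {(1 : ZMod N)}).Adj i i'
          · rw [if_pos h1,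
              Finset.sum_congr rfl (fun j' (_ : j' ∈ Finset.univ) =>
                if_congr (and_iff_right h1) rfl rfl),
              Finset.sum_ite_eq]
            simp
          · rw [if_neg h1]
            exact Finset.sum_eq_zero fun j' _ => if_neg (fun h => h1 h.1)
        have hB : (∑ i' : ZMod N, ∑ j' : Fin r,
            if i = i' ∧ (pathGraph r).Adj j j' then (1:ℕ) else 0)
            = if (j : ℕ) = 0 then 1 else 2 := by
          rw [← path_count j (by omega), Finset.sum_comm]
          refine Finset.sum_congr rfl fun j' _ => ?_
          by_cases h1 : (pathGraph r).Adj j j'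
          · rw [if_pos h1,
              Finset.sum_congr rfl (fun i' (_ : i' ∈ Finset.univ) =>
                if_congr (and_iff_left h1) rfl rfl),
              Finset.sum_ite_eq]
            simp
          · rw [if_neg h1]
            exact Finset.sum_eq_zero fun i' _ => if_neg (fun h => h1 h.2)
        rw [hA, hB]
        by_cases h0 : (j : ℕ) = 0 <;> simp [h0]
      · rw [if_neg hj]
        refine Finset.sum_eq_zero fun v _ => ?_
        exact if_neg (fun h => hj ((hmemS _).1 h.1))
    have final : (∑ u : ZMod N × Fin r,
        if (u.2 : ℕ) < m then (if (u.2 : ℕ) = 0 then (3:ℕ) else 4) else 0)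
        = N * (4 * m - 1) := by
      rw [Fintype.sum_prod_type]
      have hin : (∑ j : Fin r, if (j : ℕ) < m then (if (j : ℕ) = 0 then (3:ℕ) else 4) else 0)
          = 4 * m - 1 := by
        rw [Fin.sum_univ_eq_sum_range
          (fun t => if t < m then (if t = 0 then (3:ℕ) else 4) else 0) r]
        rw [← Finset.sum_subset (Finset.range_subset_range.mpr hmr.le)
          (fun x _ hx => by rw [Finset.mem_range, not_lt] at hx; simp [Nat.not_lt.mpr hx])]
        obtain ⟨k, rfl⟩ : ∃ k, m = k + 1 := ⟨m - 1, by omega⟩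
        rw [Finset.sum_range_succ']
        have h4 : ∀ t ∈ Finset.range k,
            (if t + 1 < k + 1 then (if t + 1 = 0 then (3:ℕ) else 4) else 0) = 4 := by
          intro t ht; rw [Finset.mem_range] at ht; simp; omega
        rw [Finset.sum_congr rfl h4, Finset.sum_const, Finset.card_range]
        simp; omega
      rw [Finset.sum_congr rfl (fun (i : ZMod N) _ => hin), Finset.sum_const,
        Finset.card_univ, ZMod.card, smul_eq_mul]
    rw [volume, Set.ncard_eq_toFinset_card', Set.toFinset_setOf, Finset.card_filter,
      Fintype.sum_prod_type, ← final]
    exact Finset.sum_congr rfl fun u _ => step u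
end

section
/- Let N ≥ 3, r ≥ 2 be integers and let G_{N,r} be the spider web graph. For every integer k with 2 ≤ k ≤ N there exists a wedge partition S_1, ..., S_k of the vertex set of G_{N,r} into k parts such that max_{1 ≤ i ≤ k} Cut(S_i)/Volume(S_i) ≤ r/(⌊N/k⌋·(2r−1)), where ⌊N/k⌋ denotes integer division. Consequently the wedge Cheeger constant φ_{N,r}(k), the minimum of this maximum over all wedge partitions into k parts, satisfies φ_{N,r}(k) ≤ r/(⌊N/k⌋(2r−1)). -/
/-- A wedge partition of the vertex set of the spider web graph `G_{N,r}` into `k` parts: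
the parts are `A 1 × Fin r, ..., A k × Fin r` where the `A i` are pairwise disjoint
nonempty arcs of `ZMod N` whose union is all of `ZMod N`. -/
def IsWedgePartition (N r k : ℕ) (S : Fin k → Set (ZMod N × Fin r)) : Prop :=
  ∃ A : Fin k → Set (ZMod N),
    (∀ i, ∃ c, 1 ≤ c ∧ IsArc N (A i) c) ∧
    Pairwise (Function.onFun Disjoint A) ∧
    (⋃ i, A i) = Set.univ ∧
    ∀ i, S i = A i ×ˢ (Set.univ : Set (Fin r))

/-- `B ⊆ Fin r` is an interval: a set of consecutive integers `{a, a+1, ..., b}` with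
`a ≤ b < r` (in particular, it is nonempty). -/
def IsInterval (r : ℕ) (B : Set (Fin r)) : Prop :=
  ∃ a b : ℕ, a ≤ b ∧ b < r ∧ B = {j : Fin r | a ≤ (j : ℕ) ∧ (j : ℕ) ≤ b}

/-- A ring partition of the vertex set of the spider web graph `G_{N,r}` into `k` parts:
the parts are `ZMod N × B 1, ..., ZMod N × B k` where the `B i` are pairwise disjoint
nonempty intervals of `Fin r` whose union is all of `Fin r`. -/
def IsRingPartition (N r k : ℕ) (S : Fin k → Set (ZMod N × Fin r)) : Prop :=
  ∃ B : Fin k → Set (Fin r),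
    (∀ i, IsInterval r (B i)) ∧
    Pairwise (Function.onFun Disjoint B) ∧
    (⋃ i, B i) = Set.univ ∧
    ∀ i, S i = (Set.univ : Set (ZMod N)) ×ˢ B i

/-- The wedge Cheeger constant `φ_{N,r}(k)`: the minimum over all wedge partitions
`S 1, ..., S k` of `G_{N,r}` of `max_i Cut(S i)/Volume(S i)`. -/
noncomputable def wedgeCheeger (N r k : ℕ) : ℝ :=
  sInf {x : ℝ | ∃ S : Fin k → Set (ZMod N × Fin r), IsWedgePartition N r k S ∧
    x = ⨆ i, (cut (spiderWeb N r) (S i) : ℝ) / (volume (spiderWeb N r) (S i) : ℝ)}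

/-- The ring Cheeger constant `ψ_{N,r}(k)`: the minimum over all ring partitions
`S 1, ..., S k` of `G_{N,r}` of `max_i Cut(S i)/Volume(S i)`. -/
noncomputable def ringCheeger (N r k : ℕ) : ℝ :=
  sInf {x : ℝ | ∃ S : Fin k → Set (ZMod N × Fin r), IsRingPartition N r k S ∧
    x = ⨆ i, (cut (spiderWeb N r) (S i) : ℝ) / (volume (spiderWeb N r) (S i) : ℝ)}

lemma zmod_cast_inj {N : ℕ} [NeZero N] {t t' : ℕ} (h : t < N) (h' : t' < N)
    (e : (t : ZMod N) = (t' : ZMod N)) : t = t' := by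
  have h1 := ZMod.val_cast_of_lt h
  have h2 := ZMod.val_cast_of_lt h'
  rw [e] at h1; omega

lemma sw_adj {N r : ℕ} {x y : ZMod N × Fin r} :
    (spiderWeb N r).Adj x y ↔
      ((SimpleGraph.circulantGraph {(1 : ZMod N)}).Adj x.1 y.1 ∧ x.2 = y.2) ∨
      (x.1 = y.1 ∧ (SimpleGraph.pathGraph r).Adj x.2 y.2) := by
  rw [spiderWeb, SimpleGraph.boxProd_adj]
  tauto

lemma circ_adj {N : ℕ} (hN : 3 ≤ N) {x y : ZMod N} :
    (SimpleGraph.circulantGraph {(1 : ZMod N)}).Adj x y ↔ y = x + 1 ∨ y = x - 1 := by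
  rw [SimpleGraph.circulantGraph_adj]
  constructor
  · rintro ⟨hne, h | h⟩
    · simp only [Set.mem_singleton_iff] at h
      right; rw [← h]; ring
    · simp only [Set.mem_singleton_iff] at h
      left; rw [← h]; ring
  · haveI : NeZero N := ⟨by omega⟩
    have h1 : (1 : ZMod N) ≠ 0 := by
      intro h
      have := Nat.le_of_dvd one_pos ((ZMod.natCast_eq_zero_iff 1 N).mp (by exact_mod_cast h))
      omega
    rintro (rfl | rfl)
    · exact ⟨by intro h; apply h1; linear_combination -h, Or.inr (by simp)⟩
    · exact ⟨by intro h; apply h1; linear_combination h, Or.inl (by simp)⟩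

lemma cut_le_aux (N r : ℕ) (hN : 3 ≤ N) (a : ZMod N) (c : ℕ) (hc1 : 1 ≤ c) (hcN : c < N) :
    cut (spiderWeb N r) (((fun t : ℕ => a + (t : ZMod N)) '' Set.Iio c) ×ˢ
      (Set.univ : Set (Fin r))) ≤ 2 * r := by
  haveI : NeZero N := ⟨by omega⟩
  set A : Set (ZMod N) := (fun t : ℕ => a + (t : ZMod N)) '' Set.Iio c with hA
  set g : Bool × Fin r → (ZMod N × Fin r) × (ZMod N × Fin r) := fun p =>
    if p.1 then ((a, p.2), (a - 1, p.2))
    else ((a + ((c - 1 : ℕ) : ZMod N), p.2), (a + (c : ZMod N), p.2)) with hg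
  have hsub : {p : (ZMod N × Fin r) × (ZMod N × Fin r) |
      p.1 ∈ A ×ˢ (Set.univ : Set (Fin r)) ∧ p.2 ∉ A ×ˢ (Set.univ : Set (Fin r)) ∧
      (spiderWeb N r).Adj p.1 p.2} ⊆ Set.range g := by
    rintro ⟨⟨i, j⟩, ⟨i', j'⟩⟩ ⟨hmem, hnot, hadj⟩
    simp only [Set.mem_prod, Set.mem_univ, and_true] at hmem hnot
    rw [sw_adj] at hadj
    rcases hadj with ⟨hcirc, hj⟩ | ⟨hi, _⟩
    · simp only at hcirc hj
      subst hj
      rw [circ_adj hN] at hcirc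
      obtain ⟨t, ht, rfl⟩ := hmem
      simp only [Set.mem_Iio] at ht
      rcases hcirc with rfl | rfl
      · -- i' = i + 1, so t = c - 1
        have htc : t = c - 1 := by
          by_contra hne
          apply hnot
          exact ⟨t + 1, by simp only [Set.mem_Iio]; omega, by push_cast; ring⟩
        subst htc
        refine ⟨(false, j), ?_⟩
        have hcc : ((c : ℕ) : ZMod N) = ((c - 1 : ℕ) : ZMod N) + 1 := by
          have h' : c - 1 + 1 = c := by omega
          rw [← h']; push_cast; ring
        simp only [hg, if_neg (Bool.false_ne_true), Prod.mk.injEq, hcc]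
        and_intros <;> first | rfl | (push_cast; try ring)
      · -- i' = i - 1, so t = 0
        have ht0 : t = 0 := by
          by_contra hne
          apply hnot
          refine ⟨t - 1, by simp only [Set.mem_Iio]; omega, ?_⟩
          have h1 : t = (t - 1) + 1 := by omega
          rw [h1]; push_cast; ring
        subst ht0
        refine ⟨(true, j), ?_⟩
        simp only [hg, if_pos rfl, Prod.mk.injEq]
        and_intros <;> first | rfl | (push_cast; try ring)
    · simp only at hi
      exact absurd (hi ▸ hmem) hnot
  calc cut (spiderWeb N r) (A ×ˢ (Set.univ : Set (Fin r)))
      ≤ (Set.range g).ncard := Set.ncard_le_ncard hsub (Set.toFinite _)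
    _ ≤ (Set.univ : Set (Bool × Fin r)).ncard := by
        rw [← Set.image_univ]; exact Set.ncard_image_le (Set.toFinite _)
    _ = 2 * r := by rw [Set.ncard_univ]; simp [Nat.card_prod, mul_comm]

lemma vol_ge_aux (N r : ℕ) (hN : 3 ≤ N) (hr : 2 ≤ r) (a : ZMod N) (c : ℕ)
    (hc1 : 1 ≤ c) (hcN : c < N) :
    c * (4 * r - 2) ≤ volume (spiderWeb N r)
      (((fun t : ℕ => a + (t : ZMod N)) '' Set.Iio c) ×ˢ (Set.univ : Set (Fin r))) := by
  haveI : NeZero N := ⟨by omega⟩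
  have hone : (1 : ZMod N) ≠ 0 := by
    intro h
    have := Nat.le_of_dvd one_pos ((ZMod.natCast_eq_zero_iff 1 N).mp (by exact_mod_cast h))
    omega
  have htwo : (2 : ZMod N) ≠ 0 := by
    intro h
    have := Nat.le_of_dvd two_pos ((ZMod.natCast_eq_zero_iff 2 N).mp (by exact_mod_cast h))
    omega
  set A : Set (ZMod N) := (fun t : ℕ => a + (t : ZMod N)) '' Set.Iio c with hA
  set T : Set ((ZMod N × Fin r) × (ZMod N × Fin r)) :=
    {p | p.1 ∈ A ×ˢ (Set.univ : Set (Fin r)) ∧ (spiderWeb N r).Adj p.1 p.2} with hT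
  set f1 : Fin c × Fin r × Bool → (ZMod N × Fin r) × (ZMod N × Fin r) := fun x =>
    ((a + ((x.1 : ℕ) : ZMod N), x.2.1),
     (a + ((x.1 : ℕ) : ZMod N) + (if x.2.2 then 1 else -1), x.2.1)) with hf1def
  set f2 : Fin c × Fin (r - 1) × Bool → (ZMod N × Fin r) × (ZMod N × Fin r) := fun x =>
    if x.2.2 then
      ((a + ((x.1 : ℕ) : ZMod N), ⟨(x.2.1 : ℕ), by omega⟩),
       (a + ((x.1 : ℕ) : ZMod N), ⟨(x.2.1 : ℕ) + 1, by omega⟩))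
    else
      ((a + ((x.1 : ℕ) : ZMod N), ⟨(x.2.1 : ℕ) + 1, by omega⟩),
       (a + ((x.1 : ℕ) : ZMod N), ⟨(x.2.1 : ℕ), by omega⟩)) with hf2def
  have hmemA : ∀ t : Fin c, a + ((t : ℕ) : ZMod N) ∈ A :=
    fun t => ⟨(t : ℕ), by simpa using t.isLt, rfl⟩
  have hinj1 : Function.Injective f1 := by
    rintro ⟨t, j, s⟩ ⟨t', j', s'⟩ h
    simp only [hf1def, Prod.mk.injEq] at h
    obtain ⟨⟨h1a, h1b⟩, h2a, _⟩ := h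
    have htt : (t : ℕ) = (t' : ℕ) :=
      zmod_cast_inj (by omega) (by omega) (add_left_cancel h1a)
    have hss : s = s' := by
      rw [show ((t' : ℕ) : ZMod N) = ((t : ℕ) : ZMod N) by rw [htt]] at h2a
      have he : (if s then (1 : ZMod N) else -1) = (if s' then 1 else -1) :=
        add_left_cancel h2a
      cases s <;> cases s' <;>
        simp only [Bool.false_eq_true, if_true, if_false] at he <;> try rfl
      · exact absurd (show (2 : ZMod N) = 0 by linear_combination - he) htwo
      · exact absurd (show (2 : ZMod N) = 0 by linear_combination he) htwo
    simp only [Prod.mk.injEq]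
    exact ⟨Fin.ext htt, h1b, hss⟩
  have hinj2 : Function.Injective f2 := by
    rintro ⟨t, j, s⟩ ⟨t', j', s'⟩ h
    have ha1 : (f2 (t, j, s)).1.1 = (f2 (t', j', s')).1.1 := by rw [h]
    have e1 : ((f2 (t, j, s)).1.2 : ℕ) = ((f2 (t', j', s')).1.2 : ℕ) := by rw [h]
    have e2 : ((f2 (t, j, s)).2.2 : ℕ) = ((f2 (t', j', s')).2.2 : ℕ) := by rw [h]
    have htt : (t : ℕ) = (t' : ℕ) := by
      cases s <;> cases s' <;>
        simp only [hf2def, Bool.false_eq_true, if_true, if_false] at ha1 <;>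
        exact zmod_cast_inj (by omega) (by omega) (add_left_cancel ha1)
    cases s <;> cases s' <;>
      simp only [hf2def, Bool.false_eq_true, if_true, if_false] at e1 e2
    · simp only [Prod.mk.injEq]
      exact ⟨Fin.ext htt, Fin.ext (by omega), by trivial⟩
    · exfalso; omega
    · exfalso; omega
    · simp only [Prod.mk.injEq]
      exact ⟨Fin.ext htt, Fin.ext (by omega), by trivial⟩
  have hr1 : Set.range f1 ⊆ T := by
    rintro _ ⟨⟨t, j, s⟩, rfl⟩
    refine ⟨⟨hmemA t, Set.mem_univ _⟩, ?_⟩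
    rw [sw_adj]
    left
    refine ⟨?_, rfl⟩
    rw [circ_adj hN]
    cases s
    · right; simp only [hf1def, Bool.false_eq_true, if_false]; try ring
    · left; simp only [hf1def, if_true]; try ring
  have hr2 : Set.range f2 ⊆ T := by
    rintro _ ⟨⟨t, j, s⟩, rfl⟩
    cases s <;> simp only [hf2def, Bool.false_eq_true, if_true, if_false] <;>
      refine ⟨⟨hmemA t, Set.mem_univ _⟩, ?_⟩ <;> rw [sw_adj] <;> right <;>
      refine ⟨rfl, ?_⟩ <;> rw [SimpleGraph.pathGraph_adj] <;> simp
  have hdisj : Disjoint (Set.range f1) (Set.range f2) := by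
    rw [Set.disjoint_left]
    rintro _ ⟨⟨t, j, s⟩, rfl⟩ ⟨⟨t', j', s'⟩, hq⟩
    have hfst : (f1 (t, j, s)).1.1 = (f1 (t, j, s)).2.1 := by
      rw [← hq]
      cases s' <;> simp [hf2def]
    simp only [hf1def] at hfst
    have h0 : (if s then (1 : ZMod N) else -1) = 0 := by linear_combination - hfst
    cases s <;> simp only [Bool.false_eq_true, if_true, if_false] at h0
    · exact absurd (show (1 : ZMod N) = 0 by linear_combination - h0) hone
    · exact absurd h0 hone
  have hcard1 : (Set.range f1).ncard = c * r * 2 := by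
    rw [← Set.image_univ, Set.ncard_image_of_injective _ hinj1, Set.ncard_univ]
    simp [Nat.card_prod, mul_assoc]
  have hcard2 : (Set.range f2).ncard = c * (r - 1) * 2 := by
    rw [← Set.image_univ, Set.ncard_image_of_injective _ hinj2, Set.ncard_univ]
    simp [Nat.card_prod, mul_assoc]
  have hunion : (Set.range f1 ∪ Set.range f2).ncard = c * r * 2 + c * (r - 1) * 2 := by
    rw [Set.ncard_union_eq hdisj (Set.toFinite _) (Set.toFinite _), hcard1, hcard2]
  have hle : (Set.range f1 ∪ Set.range f2).ncard ≤ volume (spiderWeb N r)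
      (A ×ˢ (Set.univ : Set (Fin r))) :=
    Set.ncard_le_ncard (Set.union_subset hr1 hr2) (Set.toFinite _)
  rw [hunion] at hle
  calc c * (4 * r - 2) = c * r * 2 + c * (r - 1) * 2 := by
        have h1 : c * (4 * r - 2) = c * (2 * r + 2 * (r - 1)) := by congr 1; omega
        rw [h1]; ring
    _ ≤ _ := hle

theorem wedgeCheeger_le' (N r k : ℕ) (hN : 3 ≤ N) (hr : 2 ≤ r) (hk : 2 ≤ k) (hkN : k ≤ N) :
    (∃ S : Fin k → Set (ZMod N × Fin r),
      (∃ A : Fin k → Set (ZMod N),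
        (∀ i, ∃ c, 1 ≤ c ∧ ∃ a : ZMod N, A i = (fun t : ℕ => a + (t : ZMod N)) '' Set.Iio c) ∧
        Pairwise (Function.onFun Disjoint A) ∧
        (⋃ i, A i) = Set.univ ∧
        ∀ i, S i = A i ×ˢ (Set.univ : Set (Fin r))) ∧
      ∀ i, (cut (spiderWeb N r) (S i) : ℝ) / (volume (spiderWeb N r) (S i) : ℝ)
        ≤ (r : ℝ) / (((N / k : ℕ) : ℝ) * (2 * (r : ℝ) - 1))) := by
  haveI : NeZero N := ⟨by omega⟩
  set q := N / k with hq
  set m := N % k with hm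
  have hq1 : 1 ≤ q := (Nat.one_le_div_iff (by omega)).mpr hkN
  have hq2 : q ≤ N / 2 := Nat.div_le_div_left hk (by omega)
  have hmk : m < k := Nat.mod_lt _ (by omega)
  set aa : ℕ → ℕ := fun i => i * q + min i m with haa
  set cc : ℕ → ℕ := fun i => q + if i < m then 1 else 0 with hcc
  have hcc1 : ∀ i, 1 ≤ cc i := by intro i; simp only [hcc]; omega
  have hccN : ∀ i, cc i < N := by
    intro i; simp only [hcc]; split_ifs <;> omega
  have key : ∀ i, aa (i + 1) = aa i + cc i := by
    intro i
    have h1 : (i + 1) * q = i * q + q := by ring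
    simp only [haa, hcc]; split_ifs with h <;> omega
  have hak : aa k = N := by
    simp only [haa]
    rw [min_eq_right hmk.le, hq, hm]
    exact Nat.div_add_mod N k
  have amono : ∀ {i j : ℕ}, i ≤ j → aa i ≤ aa j := by
    intro i j h
    induction j with
    | zero => have : i = 0 := by omega
              subst this; exact le_rfl
    | succ n ih =>
      rcases Nat.lt_succ_iff_lt_or_eq.mp (Nat.lt_succ_of_le h) with h' | h'
      · have := ih (by omega)
        rw [key n]
        have := hcc1 n
        omega
      · subst h'; exact le_rfl
  have hiN : ∀ l : ℕ, l < k → aa l + cc l ≤ N := by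
    intro l hl
    rw [← key, ← hak]
    exact amono (by omega)
  have cover : ∀ j, j ≤ k → ∀ s, s < aa j → ∃ i, i < k ∧ aa i ≤ s ∧ s < aa i + cc i := by
    intro j
    induction j with
    | zero => intro _ s hs; simp only [haa, Nat.zero_mul, Nat.zero_min] at hs; omega
    | succ n ih =>
      intro hjk s hs
      by_cases h : aa n ≤ s
      · exact ⟨n, by omega, h, by rw [← key]; exact hs⟩
      · exact ih (by omega) s (by omega)
  set A : Fin k → Set (ZMod N) :=
    fun i => (fun t : ℕ => ((aa (i : ℕ) : ℕ) : ZMod N) + (t : ZMod N)) '' Set.Iio (cc (i : ℕ))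
    with hAdef
  have hIco : ∀ i : Fin k,
      A i = (fun s : ℕ => (s : ZMod N)) '' Set.Ico (aa (i : ℕ)) (aa (i : ℕ) + cc (i : ℕ)) := by
    intro i; ext x; constructor
    · rintro ⟨t, ht, rfl⟩
      simp only [Set.mem_Iio] at ht
      exact ⟨aa (i : ℕ) + t, ⟨by omega, by omega⟩, by push_cast; ring⟩
    · rintro ⟨s, ⟨h1, h2⟩, rfl⟩
      refine ⟨s - aa (i : ℕ), by simp only [Set.mem_Iio]; omega, ?_⟩
      have hs : s = aa (i : ℕ) + (s - aa (i : ℕ)) := by omega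
      simp only
      conv_rhs => rw [hs]
      push_cast
      ring
  have hdisjA : Pairwise (Function.onFun Disjoint A) := by
    have main : ∀ i j : Fin k, (i : ℕ) < (j : ℕ) → Disjoint (A i) (A j) := by
      intro i j hij
      rw [Set.disjoint_left]
      intro x hxi hxj
      rw [hIco] at hxi hxj
      obtain ⟨s, ⟨hs1, hs2⟩, rfl⟩ := hxi
      obtain ⟨s', ⟨hs1', hs2'⟩, he⟩ := hxj
      have hsN : s < N := lt_of_lt_of_le hs2 (hiN _ i.isLt)
      have hsN' : s' < N := lt_of_lt_of_le hs2' (hiN _ j.isLt)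
      have hij2 : aa (i : ℕ) + cc (i : ℕ) ≤ aa (j : ℕ) := by
        rw [← key]; exact amono (by omega)
      have := zmod_cast_inj hsN' hsN he
      omega
    intro i j hij
    rcases Nat.lt_or_ge (i : ℕ) (j : ℕ) with h | h
    · exact main i j h
    · have : (j : ℕ) < (i : ℕ) := by
        rcases Nat.lt_or_ge (j : ℕ) (i : ℕ) with h' | h'
        · exact h'
        · exact absurd (Fin.ext (by omega)) hij
      exact (main j i this).symm
  have hunionA : (⋃ i, A i) = Set.univ := by
    ext x
    simp only [Set.mem_iUnion, Set.mem_univ, iff_true]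
    obtain ⟨i, hik, h1, h2⟩ := cover k le_rfl (ZMod.val x) (by rw [hak]; exact ZMod.val_lt x)
    refine ⟨⟨i, hik⟩, ?_⟩
    rw [hIco]
    exact ⟨ZMod.val x, ⟨h1, h2⟩, ZMod.natCast_rightInverse x⟩
  set S : Fin k → Set (ZMod N × Fin r) := fun i => A i ×ˢ (Set.univ : Set (Fin r)) with hSdef
  refine ⟨S, ⟨A, fun i => ⟨cc (i : ℕ), hcc1 _, ⟨((aa (i : ℕ) : ℕ) : ZMod N), rfl⟩⟩,
    hdisjA, hunionA, fun i => rfl⟩, ?_⟩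
  intro i
  have hcut : cut (spiderWeb N r) (S i) ≤ 2 * r :=
    cut_le_aux N r hN _ (cc (i : ℕ)) (hcc1 _) (hccN _)
  have hvol : q * (4 * r - 2) ≤ volume (spiderWeb N r) (S i) := by
    refine le_trans (Nat.mul_le_mul_right _ (show q ≤ cc (i : ℕ) from Nat.le_add_right _ _)) ?_
    exact vol_ge_aux N r hN hr _ (cc (i : ℕ)) (hcc1 _) (hccN _)
  have hvpos : (0 : ℝ) < ((q * (4 * r - 2) : ℕ) : ℝ) := by
    have : 0 < q * (4 * r - 2) := Nat.mul_pos (by omega) (by omega)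
    exact_mod_cast this
  have h1 : (cut (spiderWeb N r) (S i) : ℝ) ≤ 2 * (r : ℝ) := by exact_mod_cast hcut
  have h2 : ((q * (4 * r - 2) : ℕ) : ℝ) ≤ (volume (spiderWeb N r) (S i) : ℝ) := by
    exact_mod_cast hvol
  have hcast : ((q * (4 * r - 2) : ℕ) : ℝ) = 2 * ((q : ℝ) * (2 * (r : ℝ) - 1)) := by
    have h2r : 2 ≤ 4 * r := by omega
    push_cast [Nat.cast_sub h2r]
    ring
  calc (cut (spiderWeb N r) (S i) : ℝ) / (volume (spiderWeb N r) (S i) : ℝ)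
      ≤ (2 * (r : ℝ)) / ((q * (4 * r - 2) : ℕ) : ℝ) :=
        div_le_div₀ (by positivity) h1 hvpos h2
    _ = (r : ℝ) / ((q : ℝ) * (2 * (r : ℝ) - 1)) := by
        rw [hcast, mul_div_mul_left _ _ (two_ne_zero)]

/-- For `N ≥ 3`, `r ≥ 2` and `2 ≤ k ≤ N`, there is a wedge partition
`S 1, ..., S k` of the spider web graph `G_{N,r}` with
`max_i Cut(S i)/Volume(S i) ≤ r/(⌊N/k⌋(2r − 1))`; consequently the wedge Cheeger constant
satisfies `φ_{N,r}(k) ≤ r/(⌊N/k⌋(2r − 1))` (`⌊N/k⌋` is integer division). -/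
theorem wedgeCheeger_le (N r k : ℕ) (hN : 3 ≤ N) (hr : 2 ≤ r) (hk : 2 ≤ k) (hkN : k ≤ N) :
    (∃ S : Fin k → Set (ZMod N × Fin r), IsWedgePartition N r k S ∧
      ∀ i, (cut (spiderWeb N r) (S i) : ℝ) / (volume (spiderWeb N r) (S i) : ℝ)
        ≤ (r : ℝ) / (((N / k : ℕ) : ℝ) * (2 * (r : ℝ) - 1))) ∧
    wedgeCheeger N r k ≤ (r : ℝ) / (((N / k : ℕ) : ℝ) * (2 * (r : ℝ) - 1)) := by
  obtain ⟨S, hpart, hbound⟩ := wedgeCheeger_le' N r k hN hr hk hkN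
  have hpart' : IsWedgePartition N r k S := hpart
  refine ⟨⟨S, hpart', hbound⟩, ?_⟩
  haveI : Nonempty (Fin k) := ⟨⟨0, by omega⟩⟩
  have hmem : (⨆ i, (cut (spiderWeb N r) (S i) : ℝ) / (volume (spiderWeb N r) (S i) : ℝ)) ∈
      {x : ℝ | ∃ S : Fin k → Set (ZMod N × Fin r), IsWedgePartition N r k S ∧
        x = ⨆ i, (cut (spiderWeb N r) (S i) : ℝ) / (volume (spiderWeb N r) (S i) : ℝ)} :=
    ⟨S, hpart', rfl⟩
  have hbdd : BddBelow {x : ℝ | ∃ S : Fin k → Set (ZMod N × Fin r), IsWedgePartition N r k S ∧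
      x = ⨆ i, (cut (spiderWeb N r) (S i) : ℝ) / (volume (spiderWeb N r) (S i) : ℝ)} := by
    refine ⟨0, ?_⟩
    rintro x ⟨S', -, rfl⟩
    exact Real.iSup_nonneg (fun i => by positivity)
  exact csInf_le_of_le hbdd hmem (ciSup_le hbound)
end

section
/- Let N ≥ 3 be an integer and let G_{N,r} be the spider web graph with r rings. For every integer k with 2 ≤ k ≤ r there exists a ring partition S_1, ..., S_k of the vertex set of G_{N,r} into k parts such that max_{1 ≤ i ≤ k} Cut(S_i)/Volume(S_i) ≤ 1/(2⌊r/k⌋), where ⌊r/k⌋ denotes integer division. Consequently the ring Cheeger constant ψ_{N,r}(k), the minimum of this maximum over all ring partitions into k parts, satisfies ψ_{N,r}(k) ≤ 1/(2⌊r/k⌋). -/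
section Helpers
open SimpleGraph Set

private lemma ncard_prod' {α β : Type*} (s : Set α) (t : Set β) :
    (s ×ˢ t).ncard = s.ncard * t.ncard := by
  rw [← Nat.card_coe_set_eq, ← Nat.card_coe_set_eq, ← Nat.card_coe_set_eq, ← Nat.card_prod]
  exact Nat.card_congr (Equiv.Set.prod s t)

private lemma ncard_finIcc (r a b : ℕ) (hb : b < r) :
    {j : Fin r | a ≤ (j : ℕ) ∧ (j : ℕ) ≤ b}.ncard = b + 1 - a := by
  rcases le_or_gt a b with h | h
  · have he : {j : Fin r | a ≤ (j : ℕ) ∧ (j : ℕ) ≤ b}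
        = ↑(Finset.Icc (⟨a, by omega⟩ : Fin r) ⟨b, hb⟩) := by
      ext j; simp [Finset.mem_Icc, Fin.le_def]
    rw [he, Set.ncard_coe_finset, Fin.card_Icc]
  · have he : {j : Fin r | a ≤ (j : ℕ) ∧ (j : ℕ) ≤ b} = (∅ : Set (Fin r)) := by
      ext j; simp; omega
    rw [he, Set.ncard_empty]; omega

private lemma fin_val_add_one {r : ℕ} [NeZero r] (j : Fin r) (h : (j : ℕ) + 1 < r) :
    ((j + 1 : Fin r) : ℕ) = (j : ℕ) + 1 := by
  have h1 : ((1 : Fin r) : ℕ) = 1 := by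
    rw [Fin.val_one']; exact Nat.mod_eq_of_lt (by omega)
  rw [Fin.val_add, h1, Nat.mod_eq_of_lt h]

private lemma fin_val_sub_one {r : ℕ} [NeZero r] (j : Fin r) (h : 1 ≤ (j : ℕ)) :
    ((j - 1 : Fin r) : ℕ) = (j : ℕ) - 1 := by
  have hr : 2 ≤ r := by have := j.isLt; omega
  have h1 : ((1 : Fin r) : ℕ) = 1 := by
    rw [Fin.val_one']; exact Nat.mod_eq_of_lt (by omega)
  rw [Fin.sub_def]
  simp only [h1]
  have he : r - 1 + (j : ℕ) = r + ((j : ℕ) - 1) := by omega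
  simp only [he]
  rw [Nat.add_mod_left, Nat.mod_eq_of_lt (by have := j.isLt; omega)]

private lemma volume_ge (N r a b : ℕ) (hN : 3 ≤ N) (hr : 2 ≤ r) (ha : a ≤ b) (hb : b < r) :
    N * ((b + 1 - a) + (b + 1 - a) + (min b (r - 2) + 1 - a) + (b + 1 - max a 1))
      ≤ volume (spiderWeb N r)
        ((Set.univ : Set (ZMod N)) ×ˢ {j : Fin r | a ≤ (j : ℕ) ∧ (j : ℕ) ≤ b}) := by
  haveI : NeZero N := ⟨by omega⟩
  haveI : NeZero r := ⟨by omega⟩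
  classical
  have h1N : (1 : ZMod N) ≠ 0 := by
    intro h
    have : ((1 : ℕ) : ZMod N) = 0 := by exact_mod_cast h
    rw [ZMod.natCast_eq_zero_iff] at this
    have := Nat.le_of_dvd one_pos this
    omega
  have h2N : (2 : ZMod N) ≠ 0 := by
    intro h
    have : ((2 : ℕ) : ZMod N) = 0 := by exact_mod_cast h
    rw [ZMod.natCast_eq_zero_iff] at this
    have := Nat.le_of_dvd (by norm_num) this
    omega
  have hxx1 : ∀ x : ZMod N, x + 1 ≠ x := fun x h => h1N (by
    have := add_left_cancel (show x + 1 = x + 0 by rw [add_zero]; exact h)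
    exact this)
  have hxx2 : ∀ x : ZMod N, x - 1 ≠ x := fun x h => h1N (sub_eq_self.mp h)
  have hxx3 : ∀ x : ZMod N, x + 1 ≠ x - 1 := by
    intro x h
    apply h2N
    have hh : x + 1 - (x - 1) = (2 : ZMod N) := by ring
    rw [h, sub_self] at hh
    exact hh.symm
  set B : Set (Fin r) := {j : Fin r | a ≤ (j : ℕ) ∧ (j : ℕ) ≤ b} with hB
  set B2 : Set (Fin r) := {j : Fin r | a ≤ (j : ℕ) ∧ (j : ℕ) ≤ min b (r - 2)} with hB2
  set B3 : Set (Fin r) := {j : Fin r | max a 1 ≤ (j : ℕ) ∧ (j : ℕ) ≤ b} with hB3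
  set D : Set (Fin r × ℕ) :=
    (B ×ˢ {0}) ∪ (B ×ˢ {1}) ∪ (B2 ×ˢ {2}) ∪ (B3 ×ˢ {3}) with hD
  -- cardinality of D
  have hDcard : D.ncard = (b + 1 - a) + (b + 1 - a) + (min b (r - 2) + 1 - a) + (b + 1 - max a 1) := by
    have d1 : Disjoint (B ×ˢ ({0} : Set ℕ)) (B ×ˢ ({1} : Set ℕ)) := by
      rw [Set.disjoint_left]; rintro ⟨j, c⟩ ⟨-, hc⟩ ⟨-, hc'⟩
      simp only [Set.mem_singleton_iff] at hc hc'; omega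
    have d2 : Disjoint ((B ×ˢ ({0} : Set ℕ)) ∪ (B ×ˢ ({1} : Set ℕ))) (B2 ×ˢ ({2} : Set ℕ)) := by
      rw [Set.disjoint_left]; rintro ⟨j, c⟩ hm ⟨-, hc'⟩
      simp only [Set.mem_union, Set.mem_prod, Set.mem_singleton_iff] at hm hc'
      omega
    have d3 : Disjoint ((B ×ˢ ({0} : Set ℕ)) ∪ (B ×ˢ ({1} : Set ℕ)) ∪ (B2 ×ˢ ({2} : Set ℕ)))
        (B3 ×ˢ ({3} : Set ℕ)) := by
      rw [Set.disjoint_left]; rintro ⟨j, c⟩ hm ⟨-, hc'⟩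
      simp only [Set.mem_union, Set.mem_prod, Set.mem_singleton_iff] at hm hc'
      omega
    rw [hD, Set.ncard_union_eq d3 (by exact Set.toFinite _) (by exact Set.toFinite _),
      Set.ncard_union_eq d2 (by exact Set.toFinite _) (by exact Set.toFinite _),
      Set.ncard_union_eq d1 (by exact Set.toFinite _) (by exact Set.toFinite _)]
    rw [ncard_prod', ncard_prod', ncard_prod', ncard_prod']
    simp only [Set.ncard_singleton, mul_one]
    rw [hB, hB2, hB3, ncard_finIcc r a b hb, ncard_finIcc r a (min b (r-2)) (by omega),
      ncard_finIcc r (max a 1) b hb]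
  -- the injection
  set F : ZMod N × (Fin r × ℕ) → (ZMod N × Fin r) × (ZMod N × Fin r) :=
    fun z => ((z.1, z.2.1),
      if z.2.2 = 0 then (z.1 + 1, z.2.1)
      else if z.2.2 = 1 then (z.1 - 1, z.2.1)
      else if z.2.2 = 2 then (z.1, z.2.1 + 1)
      else (z.1, z.2.1 - 1)) with hF
  have hcard : ((Set.univ : Set (ZMod N)) ×ˢ D).ncard
      = N * ((b + 1 - a) + (b + 1 - a) + (min b (r - 2) + 1 - a) + (b + 1 - max a 1)) := by
    rw [ncard_prod', Set.ncard_univ, Nat.card_zmod, hDcard]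
  rw [← hcard]
  apply Set.ncard_le_ncard_of_injOn F
  · -- maps to
    rintro ⟨x, j, c⟩ ⟨-, hd⟩
    simp only [hD, Set.mem_union, Set.mem_prod, Set.mem_singleton_iff, hB, hB2, hB3,
      Set.mem_setOf_eq] at hd
    have hadjx1 : (spiderWeb N r).Adj (x, j) (x + 1, j) := by
      rw [spiderWeb, SimpleGraph.boxProd_adj]
      left
      refine ⟨?_, rfl⟩
      rw [SimpleGraph.circulantGraph_adj]
      constructor
      · show ¬ x = x + 1
        exact fun h => hxx1 x h.symm
      · right
        show x + 1 - x ∈ ({1} : Set (ZMod N))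
        rw [add_sub_cancel_left]; exact Set.mem_singleton _
    have hadjx2 : (spiderWeb N r).Adj (x, j) (x - 1, j) := by
      rw [spiderWeb, SimpleGraph.boxProd_adj]
      left
      refine ⟨?_, rfl⟩
      rw [SimpleGraph.circulantGraph_adj]
      constructor
      · show ¬ x = x - 1
        exact fun h => hxx2 x h.symm
      · left
        show x - (x - 1) ∈ ({1} : Set (ZMod N))
        rw [sub_sub_cancel]; exact Set.mem_singleton _
    rcases hd with ((⟨hj, hc⟩ | ⟨hj, hc⟩) | ⟨hj, hc⟩) | ⟨hj, hc⟩ <;> subst hc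
    · have hFe : F (x, j, 0) = ((x, j), (x + 1, j)) := by norm_num [hF]
      rw [hFe]
      exact ⟨Set.mem_prod.mpr ⟨Set.mem_univ _, hj⟩, hadjx1⟩
    · have hFe : F (x, j, 1) = ((x, j), (x - 1, j)) := by norm_num [hF]
      rw [hFe]
      exact ⟨Set.mem_prod.mpr ⟨Set.mem_univ _, hj⟩, hadjx2⟩
    · have hFe : F (x, j, 2) = ((x, j), (x, j + 1)) := by norm_num [hF]
      rw [hFe]
      refine ⟨Set.mem_prod.mpr ⟨Set.mem_univ _,
        show a ≤ (j : ℕ) ∧ (j : ℕ) ≤ b by omega⟩, ?_⟩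
      rw [spiderWeb, SimpleGraph.boxProd_adj]
      right
      refine ⟨?_, rfl⟩
      show (SimpleGraph.pathGraph r).Adj j (j + 1)
      rw [SimpleGraph.pathGraph_adj]
      left
      rw [fin_val_add_one j (by omega)]
    · have hFe : F (x, j, 3) = ((x, j), (x, j - 1)) := by norm_num [hF]
      rw [hFe]
      refine ⟨Set.mem_prod.mpr ⟨Set.mem_univ _,
        show a ≤ (j : ℕ) ∧ (j : ℕ) ≤ b by omega⟩, ?_⟩
      rw [spiderWeb, SimpleGraph.boxProd_adj]
      right
      refine ⟨?_, rfl⟩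
      show (SimpleGraph.pathGraph r).Adj j (j - 1)
      rw [SimpleGraph.pathGraph_adj]
      right
      rw [fin_val_sub_one j (by omega)]
      omega
  · -- injectivity
    rintro ⟨x, j, c⟩ ⟨-, hd⟩ ⟨x', j', c'⟩ ⟨-, hd'⟩ heq
    have hx : x = x' := congrArg (fun w => w.1.1) heq
    have hj : j = j' := congrArg (fun w => w.1.2) heq
    subst hx; subst hj
    have h2 := congrArg (fun w => w.2) heq
    simp only [hF] at h2
    simp only [hD, Set.mem_union, Set.mem_prod, Set.mem_singleton_iff, hB, hB2, hB3,
      Set.mem_setOf_eq] at hd hd'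
    have hgoal : c = c' → ((x, j, c) : ZMod N × (Fin r × ℕ)) = (x, j, c') := by
      intro h; rw [h]
    apply hgoal
    rcases hd with ((⟨hj, hc⟩ | ⟨hj, hc⟩) | ⟨hj, hc⟩) | ⟨hj, hc⟩ <;>
      rcases hd' with ((⟨hj', hc'⟩ | ⟨hj', hc'⟩) | ⟨hj', hc'⟩) | ⟨hj', hc'⟩ <;>
      subst hc <;> subst hc' <;> first
      | rfl
      | (exfalso
         norm_num at h2
         first
         | exact hxx1 x h2
         | exact hxx1 x h2.symm
         | exact hxx2 x h2
         | exact hxx2 x h2.symm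
         | exact hxx3 x h2
         | exact hxx3 x h2.symm
         | exact hxx1 x h2.1
         | exact hxx1 x h2.1.symm
         | exact hxx2 x h2.1
         | exact hxx2 x h2.1.symm
         | exact hxx3 x h2.1
         | exact hxx3 x h2.1.symm
         | exact absurd h2.2 (by omega)
         | exact h1N h2.1
         | exact h1N h2.1.symm
         | exact h1N h2
         | exact h1N h2.symm
         | (have hv := congrArg Fin.val h2
            rw [fin_val_add_one j (by omega), fin_val_sub_one j (by omega)] at hv
            omega)
         | (have hv := congrArg Fin.val h2.symm
            rw [fin_val_add_one j (by omega), fin_val_sub_one j (by omega)] at hv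
            omega)
         | (have hv := congrArg Fin.val h2.2
            rw [fin_val_add_one j (by omega), fin_val_sub_one j (by omega)] at hv
            omega)
         | (have hv := congrArg Fin.val h2.2.symm
            rw [fin_val_add_one j (by omega), fin_val_sub_one j (by omega)] at hv
            omega))
      | (exfalso; norm_num at h2)

private lemma cut_le (N r a b : ℕ) (hN : 3 ≤ N) (ha : a ≤ b) (hb : b < r) :
    cut (spiderWeb N r) ((Set.univ : Set (ZMod N)) ×ˢ {j : Fin r | a ≤ (j : ℕ) ∧ (j : ℕ) ≤ b})
      ≤ N * ((if b = r - 1 then 0 else 1) + (if a = 0 then 0 else 1)) := by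
  haveI : NeZero N := ⟨by omega⟩
  classical
  set B : Set (Fin r) := {j : Fin r | a ≤ (j : ℕ) ∧ (j : ℕ) ≤ b} with hB
  set T1 : Set (Fin r × Fin r) := {p | (p.1 : ℕ) = b ∧ (p.2 : ℕ) = b + 1} with hT1
  set T2 : Set (Fin r × Fin r) := {p | (p.1 : ℕ) = a ∧ (p.2 : ℕ) + 1 = a} with hT2
  have key : ∀ p : (ZMod N × Fin r) × (ZMod N × Fin r),
      p ∈ {p : (ZMod N × Fin r) × (ZMod N × Fin r) |
        p.1 ∈ (Set.univ : Set (ZMod N)) ×ˢ B ∧ p.2 ∉ (Set.univ : Set (ZMod N)) ×ˢ B ∧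
        (spiderWeb N r).Adj p.1 p.2} →
      p.2.1 = p.1.1 ∧ (p.1.2, p.2.2) ∈ T1 ∪ T2 := by
    rintro ⟨⟨x, j⟩, ⟨x', j'⟩⟩ ⟨h1, h2, hadj⟩
    simp only [Set.mem_prod, Set.mem_univ, true_and, hB, Set.mem_setOf_eq] at h1 h2
    rw [spiderWeb, SimpleGraph.boxProd_adj] at hadj
    rcases hadj with ⟨_, hj⟩ | ⟨hp, hx⟩
    · simp only at hj; exact absurd (hj ▸ h1) h2
    · simp only at hp hx
      have hpa := (SimpleGraph.pathGraph_adj).mp hp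
      refine ⟨hx.symm, ?_⟩
      simp only [hT1, hT2, Set.mem_union, Set.mem_setOf_eq]
      omega
  have hle : cut (spiderWeb N r) ((Set.univ : Set (ZMod N)) ×ˢ B)
      ≤ ((Set.univ : Set (ZMod N)) ×ˢ (T1 ∪ T2)).ncard := by
    apply Set.ncard_le_ncard_of_injOn (fun p => (p.1.1, (p.1.2, p.2.2)))
    · intro p hp
      exact Set.mem_prod.mpr ⟨Set.mem_univ _, (key p hp).2⟩
    · intro p hp p' hp' h
      have e := (key p hp).1; have e' := (key p' hp').1
      have h1 : p.1.1 = p'.1.1 := congrArg (fun w => w.1) h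
      have h2 : p.1.2 = p'.1.2 := congrArg (fun w => w.2.1) h
      have h3 : p.2.2 = p'.2.2 := congrArg (fun w => w.2.2) h
      have h4 : p.2.1 = p'.2.1 := by rw [e, e', h1]
      exact Prod.ext (Prod.ext h1 h2) (Prod.ext h4 h3)
  have hcard : ((Set.univ : Set (ZMod N)) ×ˢ (T1 ∪ T2)).ncard
      = N * (T1 ∪ T2).ncard := by
    rw [ncard_prod', Set.ncard_univ, Nat.card_zmod]
  have hT1c : T1.ncard ≤ (if b = r - 1 then 0 else 1) := by
    split_ifs with h
    · have : T1 = ∅ := by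
        ext ⟨u, v⟩; simp only [hT1, Set.mem_setOf_eq, Set.mem_empty_iff_false, iff_false]
        have := v.isLt; omega
      simp [this]
    · have hbr : b + 1 < r := by omega
      have : T1 ⊆ {((⟨b, hb⟩ : Fin r), (⟨b + 1, hbr⟩ : Fin r))} := by
        rintro ⟨u, v⟩ ⟨hu, hv⟩
        simp only [Set.mem_singleton_iff, Prod.mk.injEq]
        exact ⟨Fin.ext hu, Fin.ext hv⟩
      simpa using Set.ncard_le_ncard this (Set.finite_singleton _)
  have hT2c : T2.ncard ≤ (if a = 0 then 0 else 1) := by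
    split_ifs with h
    · have : T2 = ∅ := by
        ext ⟨u, v⟩; simp only [hT2, Set.mem_setOf_eq, Set.mem_empty_iff_false, iff_false]
        omega
      simp [this]
    · have har : a < r := by omega
      have har' : a - 1 < r := by omega
      have : T2 ⊆ {((⟨a, har⟩ : Fin r), (⟨a - 1, har'⟩ : Fin r))} := by
        rintro ⟨u, v⟩ ⟨hu, hv⟩
        dsimp only at hu hv
        simp only [Set.mem_singleton_iff, Prod.mk.injEq]
        exact ⟨Fin.ext hu, Fin.ext (show (v : ℕ) = a - 1 by omega)⟩
      simpa using Set.ncard_le_ncard this (Set.finite_singleton _)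
  calc cut (spiderWeb N r) ((Set.univ : Set (ZMod N)) ×ˢ B)
      ≤ N * (T1 ∪ T2).ncard := by rw [← hcard]; exact hle
    _ ≤ N * ((if b = r - 1 then 0 else 1) + (if a = 0 then 0 else 1)) := by
        refine Nat.mul_le_mul_left N ?_
        exact le_trans (Set.ncard_union_le T1 T2) (add_le_add hT1c hT2c)

end Helpers

/-- For `N ≥ 3` and `2 ≤ k ≤ r`, there is a ring partition
`S 1, ..., S k` of the spider web graph `G_{N,r}` with
`max_i Cut(S i)/Volume(S i) ≤ 1/(2⌊r/k⌋)`; consequently the ring Cheeger constant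
satisfies `ψ_{N,r}(k) ≤ 1/(2⌊r/k⌋)` (`⌊r/k⌋` is integer division). -/
theorem ringCheeger_le (N r k : ℕ) (hN : 3 ≤ N) (hk : 2 ≤ k) (hkr : k ≤ r) :
    (∃ S : Fin k → Set (ZMod N × Fin r), IsRingPartition N r k S ∧
      ∀ i, (cut (spiderWeb N r) (S i) : ℝ) / (volume (spiderWeb N r) (S i) : ℝ)
        ≤ 1 / (2 * ((r / k : ℕ) : ℝ))) ∧
    ringCheeger N r k ≤ 1 / (2 * ((r / k : ℕ) : ℝ)) := by

  have hr : 2 ≤ r := le_trans hk hkr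
  have hk0 : 0 < k := by omega
  set q := r / k with hq
  have hq1 : 1 ≤ q := (Nat.one_le_div_iff hk0).mpr hkr
  have hkq : k * q ≤ r := by rw [hq, mul_comm]; exact Nat.div_mul_le_self r k
  set lo : ℕ → ℕ := fun i => i * q with hlo
  set hi : ℕ → ℕ := fun i => if i + 1 = k then r - 1 else (i + 1) * q - 1 with hhi
  have hbasic : ∀ i : ℕ, i < k → lo i ≤ hi i ∧ hi i < r ∧ q ≤ hi i + 1 - lo i := by
    intro i hik
    have e1 : (i + 1) * q = i * q + q := by ring
    have e2 : (i + 1) * q ≤ k * q := Nat.mul_le_mul_right q (by omega)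
    simp only [hlo, hhi]
    split_ifs with h
    · omega
    · omega
  set B : Fin k → Set (Fin r) :=
    fun i => {j : Fin r | lo (i : ℕ) ≤ (j : ℕ) ∧ (j : ℕ) ≤ hi (i : ℕ)} with hB
  set S : Fin k → Set (ZMod N × Fin r) := fun i => (Set.univ : Set (ZMod N)) ×ˢ B i with hS
  have hdisj : ∀ i i' : Fin k, (i : ℕ) < (i' : ℕ) → Disjoint (B i) (B i') := by
    intro i i' hlt
    rw [Set.disjoint_left]
    intro j hj hj'
    have hj1 : lo (i : ℕ) ≤ (j : ℕ) ∧ (j : ℕ) ≤ hi (i : ℕ) := hj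
    have hj2 : lo (i' : ℕ) ≤ (j : ℕ) := hj'.1
    have h1 : (i : ℕ) + 1 ≠ k := by have := i'.isLt; omega
    have hhi_i : hi (i : ℕ) = ((i : ℕ) + 1) * q - 1 := by simp only [hhi, if_neg h1]
    have hlo_i' : lo (i' : ℕ) = (i' : ℕ) * q := rfl
    have e1 : ((i : ℕ) + 1) * q = (i : ℕ) * q + q := by ring
    have e2 : ((i : ℕ) + 1) * q ≤ (i' : ℕ) * q := Nat.mul_le_mul_right q (by omega)
    omega
  have hpart : IsRingPartition N r k S := by
    refine ⟨B, ?_, ?_, ?_, fun i => rfl⟩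
    · intro i
      obtain ⟨h1, h2, _⟩ := hbasic (i : ℕ) i.isLt
      exact ⟨lo (i : ℕ), hi (i : ℕ), h1, h2, rfl⟩
    · intro i i' hne
      have hv : (i : ℕ) ≠ (i' : ℕ) := fun h => hne (Fin.ext h)
      rcases lt_or_gt_of_ne hv with h | h
      · exact hdisj i i' h
      · exact (hdisj i' i h).symm
    · apply Set.eq_univ_of_forall
      intro j
      rw [Set.mem_iUnion]
      refine ⟨⟨min ((j : ℕ) / q) (k - 1), by omega⟩, ?_⟩
      show lo (min ((j : ℕ) / q) (k - 1)) ≤ (j : ℕ) ∧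
        (j : ℕ) ≤ hi (min ((j : ℕ) / q) (k - 1))
      have hd1 : (j : ℕ) / q * q ≤ (j : ℕ) := Nat.div_mul_le_self _ _
      have ed := Nat.div_add_mod (j : ℕ) q
      have em : (j : ℕ) % q < q := Nat.mod_lt _ (by omega)
      have e4 : q * ((j : ℕ) / q) = (j : ℕ) / q * q := by ring
      have hjr := j.isLt
      rcases le_or_gt ((j : ℕ) / q) (k - 1) with hm | hm
      · rw [min_eq_left hm]
        have hlo_d : lo ((j : ℕ) / q) = (j : ℕ) / q * q := rfl
        by_cases hc : (j : ℕ) / q + 1 = k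
        · have hhi_d : hi ((j : ℕ) / q) = r - 1 := by simp only [hhi, if_pos hc]
          omega
        · have hhi_d : hi ((j : ℕ) / q) = ((j : ℕ) / q + 1) * q - 1 := by
            simp only [hhi, if_neg hc]
          have e3 : ((j : ℕ) / q + 1) * q = (j : ℕ) / q * q + q := by ring
          omega
      · rw [min_eq_right (by omega)]
        have hlo_d : lo (k - 1) = (k - 1) * q := rfl
        have hc : (k - 1) + 1 = k := by omega
        have hhi_d : hi (k - 1) = r - 1 := by simp only [hhi, if_pos hc]
        have e5 : k * q ≤ (j : ℕ) / q * q := Nat.mul_le_mul_right q (by omega)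
        have e6 : (k - 1) * q + q = k * q := by
          calc (k - 1) * q + q = ((k - 1) + 1) * q := by ring
            _ = k * q := by rw [hc]
        omega
  haveI : Nonempty (Fin k) := ⟨⟨0, hk0⟩⟩
  have hratio : ∀ i : Fin k,
      (cut (spiderWeb N r) (S i) : ℝ) / (volume (spiderWeb N r) (S i) : ℝ)
        ≤ 1 / (2 * (q : ℝ)) := by
    intro i
    obtain ⟨h1, h2, h3⟩ := hbasic (i : ℕ) i.isLt
    have hcut' : cut (spiderWeb N r) (S i)
        ≤ N * ((if hi (i : ℕ) = r - 1 then 0 else 1) + (if lo (i : ℕ) = 0 then 0 else 1)) :=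
      cut_le N r (lo (i : ℕ)) (hi (i : ℕ)) hN h1 h2
    have hvol' : N * ((hi (i : ℕ) + 1 - lo (i : ℕ)) + (hi (i : ℕ) + 1 - lo (i : ℕ))
          + (min (hi (i : ℕ)) (r - 2) + 1 - lo (i : ℕ))
          + (hi (i : ℕ) + 1 - max (lo (i : ℕ)) 1))
        ≤ volume (spiderWeb N r) (S i) :=
      volume_ge N r (lo (i : ℕ)) (hi (i : ℕ)) hN hr h1 h2
    have hvpos : 0 < volume (spiderWeb N r) (S i) := by
      refine lt_of_lt_of_le ?_ hvol'
      have hm1 : 1 ≤ hi (i : ℕ) + 1 - lo (i : ℕ) := by omega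
      exact Nat.mul_pos (by omega) (by omega)
    have hkey : cut (spiderWeb N r) (S i) * (2 * q) ≤ volume (spiderWeb N r) (S i) := by
      refine le_trans (Nat.mul_le_mul_right _ hcut') (le_trans ?_ hvol')
      rw [mul_assoc]
      refine Nat.mul_le_mul_left N ?_
      split_ifs <;> omega
    have hqR : (0 : ℝ) < (q : ℝ) := by exact_mod_cast (show 0 < q by omega)
    have hvR : (0 : ℝ) < (volume (spiderWeb N r) (S i) : ℝ) := by exact_mod_cast hvpos
    rw [div_le_div_iff₀ hvR (by linarith)]
    have hcast : (cut (spiderWeb N r) (S i) : ℝ) * (2 * (q : ℝ))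
        ≤ (volume (spiderWeb N r) (S i) : ℝ) := by exact_mod_cast hkey
    linarith
  refine ⟨⟨S, hpart, hratio⟩, ?_⟩
  have hmem : (⨆ i, (cut (spiderWeb N r) (S i) : ℝ) / (volume (spiderWeb N r) (S i) : ℝ))
      ∈ {x : ℝ | ∃ S : Fin k → Set (ZMod N × Fin r), IsRingPartition N r k S ∧
        x = ⨆ i, (cut (spiderWeb N r) (S i) : ℝ) / (volume (spiderWeb N r) (S i) : ℝ)} :=
    ⟨S, hpart, rfl⟩
  have hbdd : BddBelow {x : ℝ | ∃ S : Fin k → Set (ZMod N × Fin r), IsRingPartition N r k S ∧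
      x = ⨆ i, (cut (spiderWeb N r) (S i) : ℝ) / (volume (spiderWeb N r) (S i) : ℝ)} := by
    refine ⟨0, fun x hx => ?_⟩
    obtain ⟨S', -, rfl⟩ := hx
    exact Real.iSup_nonneg fun i => by positivity
  exact le_trans (csInf_le hbdd hmem) (ciSup_le hratio)
end

section
/- (Proposition 1, wedge part.) Let N ≥ 3, r ≥ 2 be integers and let G_{N,r} be the spider web graph. For every integer k with 2 ≤ k ≤ N, the wedge Cheeger constant satisfies φ_{N,r}(k) ≤ (2r/(2r−1))·√(2·(1 − cos(2π⌊k/2⌋/N))); that is, there exists a wedge partition S_1, ..., S_k of G_{N,r} into k parts with max_{1 ≤ i ≤ k} Cut(S_i)/Volume(S_i) ≤ (2r/(2r−1))·√(2λ^C_k), where λ^C_k = 1 − cos(2π⌊k/2⌋/N) is the k-th eigenvalue of the normalized Laplacian of the cycle graph on N vertices and ⌊·⌋ denotes integer division. -/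
section AuxiliaryForWedge

lemma auxW_spiderWeb_adj {N r : ℕ} {u v : ZMod N × Fin r} :
    (spiderWeb N r).Adj u v ↔
      ((u.1 ≠ v.1 ∧ (u.1 - v.1 = 1 ∨ v.1 - u.1 = 1)) ∧ u.2 = v.2) ∨
      ((u.2.val + 1 = v.2.val ∨ v.2.val + 1 = u.2.val) ∧ u.1 = v.1) := by
  simp [spiderWeb, SimpleGraph.boxProd_adj, SimpleGraph.circulantGraph,
    SimpleGraph.fromRel_adj, SimpleGraph.pathGraph_adj]

lemma auxW_ncard_le_of_injOn {α β : Type*} [Finite β] (T : Set α) (g : α → β)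
    (hg : Set.InjOn g T) : T.ncard ≤ Nat.card β :=
  calc T.ncard = (g '' T).ncard := (Set.ncard_image_of_injOn hg).symm
    _ ≤ (Set.univ : Set β).ncard := Set.ncard_le_ncard (Set.subset_univ _) Set.finite_univ
    _ = Nat.card β := Set.ncard_univ β

lemma auxW_card_le_ncard_of_inj {α β : Type*} [Finite β] (T : Set β) (f : α → β)
    (hf : Function.Injective f) (hmem : ∀ x, f x ∈ T) : Nat.card α ≤ T.ncard :=
  calc Nat.card α = (Set.univ : Set α).ncard := (Set.ncard_univ α).symm
    _ = (f '' Set.univ).ncard := (Set.ncard_image_of_injOn hf.injOn).symm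
    _ ≤ T.ncard := Set.ncard_le_ncard (by rintro y ⟨x, _, rfl⟩; exact hmem x) (Set.toFinite T)

lemma auxW_cut_arc_le {N r : ℕ} (hN : 3 ≤ N) (a : ZMod N) {c : ℕ} (hc1 : 1 ≤ c) :
    cut (spiderWeb N r)
      (((fun t : ℕ => a + (t : ZMod N)) '' Set.Iio c) ×ˢ (Set.univ : Set (Fin r))) ≤ 2 * r := by
  haveI : NeZero N := ⟨by omega⟩
  set A : Set (ZMod N) := (fun t : ℕ => a + (t : ZMod N)) '' Set.Iio c with hA
  have hone : (1 : ZMod N) ≠ 0 := by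
    intro h
    have h2 : ((1 : ℕ) : ZMod N).val = 1 := ZMod.val_cast_of_lt (by omega)
    rw [Nat.cast_one, h, ZMod.val_zero] at h2
    exact absurd h2 (by omega)
  have h11 : (1 : ZMod N) ≠ -1 := by
    intro h
    have h2 : ((2 : ℕ) : ZMod N).val = 2 := ZMod.val_cast_of_lt (by omega)
    rw [eq_neg_iff_add_eq_zero, one_add_one_eq_two] at h
    rw [Nat.cast_ofNat, h, ZMod.val_zero] at h2
    exact absurd h2 (by omega)
  have hright : ∀ x ∈ A, x + 1 ∉ A → x = a + ((c - 1 : ℕ) : ZMod N) := by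
    rintro x ⟨t, ht, rfl⟩ hx
    have htc : t = c - 1 := by
      by_contra h
      exact hx ⟨t + 1, by simp at ht ⊢; omega, by push_cast; ring⟩
    subst htc; rfl
  have hleft : ∀ x ∈ A, x - 1 ∉ A → x = a := by
    rintro x ⟨t, ht, rfl⟩ hx
    have ht0 : t = 0 := by
      by_contra h
      refine hx ⟨t - 1, by simp at ht ⊢; omega, ?_⟩
      push_cast [Nat.cast_sub (by omega : 1 ≤ t)]
      ring
    subst ht0; simp
  have key : ∀ p : (ZMod N × Fin r) × (ZMod N × Fin r),
      p ∈ {p : (ZMod N × Fin r) × (ZMod N × Fin r) |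
        p.1 ∈ A ×ˢ (Set.univ : Set (Fin r)) ∧ p.2 ∉ A ×ˢ (Set.univ : Set (Fin r)) ∧
        (spiderWeb N r).Adj p.1 p.2} →
      p.1.1 ∈ A ∧ p.2.1 ∉ A ∧ p.1.2 = p.2.2 ∧ (p.2.1 = p.1.1 + 1 ∨ p.2.1 = p.1.1 - 1) := by
    rintro ⟨⟨x, j⟩, ⟨y, j'⟩⟩ ⟨⟨hxA, -⟩, hyS, hadj⟩
    rw [auxW_spiderWeb_adj] at hadj
    rcases hadj with ⟨⟨hne, hd⟩, hj⟩ | ⟨-, hxy⟩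
    · refine ⟨hxA, fun hyA => hyS ⟨hyA, trivial⟩, hj, ?_⟩
      rcases hd with hd | hd
      · right; linear_combination -hd
      · left; linear_combination hd
    · exact absurd (show (y, j') ∈ A ×ˢ (Set.univ : Set (Fin r)) from ⟨hxy ▸ hxA, trivial⟩) hyS
  have hle := auxW_ncard_le_of_injOn (β := Fin r × Bool)
    {p : (ZMod N × Fin r) × (ZMod N × Fin r) |
      p.1 ∈ A ×ˢ (Set.univ : Set (Fin r)) ∧ p.2 ∉ A ×ˢ (Set.univ : Set (Fin r)) ∧
      (spiderWeb N r).Adj p.1 p.2}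
    (fun p => (p.1.2, decide (p.2.1 = p.1.1 + 1))) ?_
  · calc cut (spiderWeb N r) (A ×ˢ (Set.univ : Set (Fin r))) ≤ Nat.card (Fin r × Bool) := hle
      _ = 2 * r := by simp [Nat.card_eq_fintype_card]; ring
  · intro p hp q hq heq
    obtain ⟨hpA, hpN, hpj, hpd⟩ := key p hp
    obtain ⟨hqA, hqN, hqj, hqd⟩ := key q hq
    obtain ⟨⟨x, j⟩, ⟨y, j'⟩⟩ := p
    obtain ⟨⟨x2, j2⟩, ⟨y2, j2'⟩⟩ := q
    simp only [Prod.mk.injEq] at heq ⊢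
    obtain ⟨hjj, hdd⟩ := heq
    simp only at hpA hpN hpj hpd hqA hqN hqj hqd hjj ⊢
    rw [decide_eq_decide] at hdd
    by_cases hcase : y = x + 1
    · have hy2 : y2 = x2 + 1 := hdd.mp hcase
      have hx : x = a + ((c - 1 : ℕ) : ZMod N) := hright x hpA (hcase ▸ hpN)
      have hx2 : x2 = a + ((c - 1 : ℕ) : ZMod N) := hright x2 hqA (hy2 ▸ hqN)
      refine ⟨⟨hx.trans hx2.symm, hjj⟩, ?_, hpj ▸ hqj ▸ hjj⟩
      rw [hcase, hy2, hx, hx2]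
    · have hcase2 : y2 ≠ x2 + 1 := fun h => hcase (hdd.mpr h)
      have hy : y = x - 1 := hpd.resolve_left hcase
      have hy2 : y2 = x2 - 1 := hqd.resolve_left hcase2
      have hx : x = a := hleft x hpA (by rw [← hy]; exact hpN)
      have hx2 : x2 = a := hleft x2 hqA (by rw [← hy2]; exact hqN)
      refine ⟨⟨hx.trans hx2.symm, hjj⟩, ?_, hpj ▸ hqj ▸ hjj⟩
      rw [hy, hy2, hx, hx2]

def auxW_arcF (N r : ℕ) (a : ZMod N) (c : ℕ) :
    (Fin c × Fin r × Bool) ⊕ (Fin c × Fin (r - 1) × Bool) →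
      (ZMod N × Fin r) × (ZMod N × Fin r)
  | Sum.inl (t, j, b) =>
      ((a + ((t : ℕ) : ZMod N), j), (a + ((t : ℕ) : ZMod N) + (if b then 1 else -1), j))
  | Sum.inr (t, j, b) =>
      if b then
        ((a + ((t : ℕ) : ZMod N), ⟨j.val, by have := j.isLt; omega⟩),
         (a + ((t : ℕ) : ZMod N), ⟨j.val + 1, by have := j.isLt; omega⟩))
      else
        ((a + ((t : ℕ) : ZMod N), ⟨j.val + 1, by have := j.isLt; omega⟩),
         (a + ((t : ℕ) : ZMod N), ⟨j.val, by have := j.isLt; omega⟩))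

lemma auxW_volume_arc_ge {N r : ℕ} (hN : 3 ≤ N) (a : ZMod N) {c : ℕ} (hcN : c ≤ N) :
    c * (4 * r - 2) ≤ volume (spiderWeb N r)
      (((fun t : ℕ => a + (t : ZMod N)) '' Set.Iio c) ×ˢ (Set.univ : Set (Fin r))) := by
  haveI : NeZero N := ⟨by omega⟩
  set A : Set (ZMod N) := (fun t : ℕ => a + (t : ZMod N)) '' Set.Iio c with hA
  have hone : (1 : ZMod N) ≠ 0 := by
    intro h
    have h2 : ((1 : ℕ) : ZMod N).val = 1 := ZMod.val_cast_of_lt (by omega)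
    rw [Nat.cast_one, h, ZMod.val_zero] at h2
    exact absurd h2 (by omega)
  have h11 : (1 : ZMod N) ≠ -1 := by
    intro h
    have h2 : ((2 : ℕ) : ZMod N).val = 2 := ZMod.val_cast_of_lt (by omega)
    rw [eq_neg_iff_add_eq_zero, one_add_one_eq_two] at h
    rw [Nat.cast_ofNat, h, ZMod.val_zero] at h2
    exact absurd h2 (by omega)
  have hinj : ∀ t t' : Fin c, a + ((t : ℕ) : ZMod N) = a + ((t' : ℕ) : ZMod N) → t = t' := by
    intro t t' h
    have h2 := add_left_cancel h
    have : (t : ℕ) = (t' : ℕ) := by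
      rw [← ZMod.val_cast_of_lt (lt_of_lt_of_le t.isLt hcN),
        ← ZMod.val_cast_of_lt (lt_of_lt_of_le t'.isLt hcN), h2]
    exact Fin.ext this
  have hmem : ∀ z, auxW_arcF N r a c z ∈ {p : (ZMod N × Fin r) × (ZMod N × Fin r) |
      p.1 ∈ A ×ˢ (Set.univ : Set (Fin r)) ∧ (spiderWeb N r).Adj p.1 p.2} := by
    rintro (⟨t, j, b⟩ | ⟨t, j, b⟩) <;> cases b <;>
      simp only [auxW_arcF, if_true, if_false, Bool.false_eq_true, Set.mem_setOf_eq]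
    · refine ⟨⟨⟨(t : ℕ), t.isLt, rfl⟩, trivial⟩, ?_⟩
      rw [auxW_spiderWeb_adj]; left
      exact ⟨⟨fun h => hone (by linear_combination h), Or.inl (by ring)⟩, rfl⟩
    · refine ⟨⟨⟨(t : ℕ), t.isLt, rfl⟩, trivial⟩, ?_⟩
      rw [auxW_spiderWeb_adj]; left
      exact ⟨⟨fun h => hone (by linear_combination -h), Or.inr (by ring)⟩, rfl⟩
    · refine ⟨⟨⟨(t : ℕ), t.isLt, rfl⟩, trivial⟩, ?_⟩
      rw [auxW_spiderWeb_adj]; right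
      exact ⟨Or.inr rfl, rfl⟩
    · refine ⟨⟨⟨(t : ℕ), t.isLt, rfl⟩, trivial⟩, ?_⟩
      rw [auxW_spiderWeb_adj]; right
      exact ⟨Or.inl rfl, rfl⟩
  have hFinj : Function.Injective (auxW_arcF N r a c) := by
    rintro (⟨t, j, b⟩ | ⟨t, j, b⟩) (⟨t', j', b'⟩ | ⟨t', j', b'⟩) h <;> cases b <;> cases b' <;>
      simp only [auxW_arcF, if_true, if_false, Bool.false_eq_true, Prod.mk.injEq, Sum.inl.injEq,
        Sum.inr.injEq, Fin.mk.injEq, and_true, true_and] at h ⊢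
    · exact ⟨hinj t t' h.1.1, h.1.2⟩
    · exact absurd (by linear_combination h.1.1 - h.2.1) h11
    · exact absurd (by linear_combination h.2.1 - h.1.1) h11
    · exact ⟨hinj t t' h.1.1, h.1.2⟩
    · exfalso
      have e1 := congrArg Fin.val h.1.2
      have e2 := congrArg Fin.val h.2.2
      simp at e1 e2
      omega
    · exfalso
      have e1 := congrArg Fin.val h.1.2
      have e2 := congrArg Fin.val h.2.2
      simp at e1 e2
      omega
    · exfalso
      have e1 := congrArg Fin.val h.1.2
      have e2 := congrArg Fin.val h.2.2
      simp at e1 e2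
      omega
    · exfalso
      have e1 := congrArg Fin.val h.1.2
      have e2 := congrArg Fin.val h.2.2
      simp at e1 e2
      omega
    · exfalso
      have e1 := congrArg Fin.val h.1.2
      have e2 := congrArg Fin.val h.2.2
      simp at e1 e2
      omega
    · exfalso
      have e1 := congrArg Fin.val h.1.2
      have e2 := congrArg Fin.val h.2.2
      simp at e1 e2
      omega
    · exfalso
      have e1 := congrArg Fin.val h.1.2
      have e2 := congrArg Fin.val h.2.2
      simp at e1 e2
      omega
    · exfalso
      have e1 := congrArg Fin.val h.1.2
      have e2 := congrArg Fin.val h.2.2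
      simp at e1 e2
      omega
    · exact ⟨hinj t t' h.1.1, Fin.ext h.2.2⟩
    · omega
    · omega
    · exact ⟨hinj t t' h.1.1, Fin.ext h.1.2⟩
  have hcard := auxW_card_le_ncard_of_inj _ (auxW_arcF N r a c) hFinj hmem
  have hc2 : Nat.card ((Fin c × Fin r × Bool) ⊕ (Fin c × Fin (r - 1) × Bool))
      = c * (4 * r - 2) := by
    simp only [Nat.card_eq_fintype_card, Fintype.card_sum, Fintype.card_prod, Fintype.card_fin,
      Fintype.card_bool]
    have h4 : 4 * r - 2 = r * 2 + (r - 1) * 2 := by omega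
    rw [h4, Nat.mul_add]
  rw [hc2] at hcard
  exact hcard

lemma auxW_nat_bound {N k q : ℕ} (hk : 2 ≤ k) (hkN : k ≤ N) (hq : q = N / k) :
    N ≤ 8 * ((k / 2) * q) := by
  have hk0 : 0 < k := by omega
  have hq1 : 1 ≤ q := by rw [hq]; exact (Nat.one_le_div_iff hk0).mpr hkN
  have hdm : k * q + N % k = N := by rw [hq]; exact Nat.div_add_mod N k
  have hremk : N % k < k := Nat.mod_lt N hk0
  have h2kq : N ≤ 2 * (k * q) := by
    rcases le_or_gt (2 * k) N with h | h
    · omega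
    · have : q < 2 := by rw [hq]; exact Nat.div_lt_of_lt_mul (by omega)
      have hq1' : q = 1 := by omega
      rw [hq1']; omega
  have h3m : k ≤ 3 * (k / 2) := by omega
  have e1 : k * q ≤ 3 * ((k / 2) * q) := by
    calc k * q ≤ (3 * (k / 2)) * q := Nat.mul_le_mul_right _ h3m
      _ = 3 * ((k / 2) * q) := by ring
  omega

set_option maxHeartbeats 800000 in
lemma auxW_arith {N r k q cu vo : ℕ} (hN : 3 ≤ N) (hr : 2 ≤ r) (hk : 2 ≤ k) (hkN : k ≤ N)
    (hq : q = N / k) (hcut : cu ≤ 2 * r) (hvol : q * (4 * r - 2) ≤ vo) :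
    (cu : ℝ) / (vo : ℝ) ≤ (2 * (r : ℝ) / (2 * (r : ℝ) - 1)) *
      Real.sqrt (2 * (1 - Real.cos (2 * Real.pi * ((k / 2 : ℕ) : ℝ) / (N : ℝ)))) := by
  have hk0 : 0 < k := by omega
  have hq1 : 1 ≤ q := by rw [hq]; exact (Nat.one_le_div_iff hk0).mpr hkN
  set m : ℕ := k / 2 with hm
  have hm1 : 1 ≤ m := by omega
  have h2m : 2 * m ≤ N := by omega
  have hNq : (N : ℝ) ≤ 8 * ((m : ℝ) * (q : ℝ)) := by
    exact_mod_cast auxW_nat_bound hk hkN hq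
  have hNpos : (0 : ℝ) < N := by positivity
  have hqpos : (0 : ℝ) < q := by exact_mod_cast hq1
  have hmpos : (0 : ℝ) < m := by exact_mod_cast hm1
  have hrR : (2 : ℝ) ≤ (r : ℝ) := by exact_mod_cast hr
  set x : ℝ := 2 * Real.pi * (m : ℝ) / (N : ℝ) with hx
  have hx0 : 0 ≤ x := by positivity
  have hxpi : x ≤ Real.pi := by
    rw [hx, div_le_iff₀ hNpos]
    have : (2 : ℝ) * m ≤ N := by exact_mod_cast h2m
    nlinarith [Real.pi_pos]
  have hcos : Real.cos x ≤ 1 - 2 / Real.pi ^ 2 * x ^ 2 :=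
    Real.cos_le_one_sub_mul_cos_sq (by rw [abs_of_nonneg hx0]; exact hxpi)
  have hsq : ((4 * m / N : ℝ)) ^ 2 ≤ 2 * (1 - Real.cos x) := by
    have hpi := Real.pi_pos
    have hexp : 2 / Real.pi ^ 2 * x ^ 2 = 8 * (m : ℝ) ^ 2 / (N : ℝ) ^ 2 := by
      rw [hx]; field_simp; ring
    have he2 : (4 * (m : ℝ) / N) ^ 2 = 2 * (8 * (m : ℝ) ^ 2 / (N : ℝ) ^ 2) := by
      field_simp; ring
    rw [he2, ← hexp]
    nlinarith [hcos]
  have hsqrt : (4 * (m : ℝ) / N) ≤ Real.sqrt (2 * (1 - Real.cos x)) := by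
    calc (4 * (m : ℝ) / N) = Real.sqrt ((4 * (m : ℝ) / N) ^ 2) :=
          (Real.sqrt_sq (by positivity)).symm
      _ ≤ _ := Real.sqrt_le_sqrt hsq
  have hvolR : q * (4 * (r : ℝ) - 2) ≤ (vo : ℝ) := by
    have hc : ((q * (4 * r - 2) : ℕ) : ℝ) = q * (4 * (r : ℝ) - 2) := by
      push_cast [Nat.cast_sub (by omega : 2 ≤ 4 * r)]; ring
    rw [← hc]; exact_mod_cast hvol
  have hvopos : (0 : ℝ) < q * (4 * (r : ℝ) - 2) := by nlinarith
  have hcutR : (cu : ℝ) ≤ 2 * r := by exact_mod_cast hcut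
  have step1 : (cu : ℝ) / (vo : ℝ) ≤ (2 * (r : ℝ)) / (q * (4 * (r : ℝ) - 2)) :=
    div_le_div₀ (by positivity) hcutR hvopos hvolR
  have hfrac : (2 * (r : ℝ)) / (q * (4 * (r : ℝ) - 2))
      = (2 * (r : ℝ) / (2 * (r : ℝ) - 1)) * (1 / (2 * q)) := by
    have h1 : (4 * (r : ℝ) - 2) ≠ 0 := by nlinarith
    have h2 : (2 * (r : ℝ) - 1) ≠ 0 := by nlinarith
    have h3 : (q : ℝ) ≠ 0 := ne_of_gt hqpos
    rw [div_mul_div_comm, div_eq_div_iff (mul_ne_zero h3 h1) (mul_ne_zero h2 (mul_ne_zero two_ne_zero h3))]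
    ring
  have step2 : (1 : ℝ) / (2 * q) ≤ 4 * (m : ℝ) / N := by
    rw [div_le_div_iff₀ (by positivity) hNpos, one_mul]
    calc (N : ℝ) ≤ 8 * ((m : ℝ) * q) := hNq
      _ = 4 * m * (2 * q) := by ring
  have hcoef : (0 : ℝ) ≤ 2 * (r : ℝ) / (2 * (r : ℝ) - 1) :=
    div_nonneg (by linarith) (by linarith)
  calc (cu : ℝ) / (vo : ℝ) ≤ (2 * (r : ℝ)) / (q * (4 * (r : ℝ) - 2)) := step1
    _ = (2 * (r : ℝ) / (2 * (r : ℝ) - 1)) * (1 / (2 * q)) := hfrac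
    _ ≤ (2 * (r : ℝ) / (2 * (r : ℝ) - 1)) * (4 * (m : ℝ) / N) :=
        mul_le_mul_of_nonneg_left step2 hcoef
    _ ≤ (2 * (r : ℝ) / (2 * (r : ℝ) - 1)) * Real.sqrt (2 * (1 - Real.cos x)) :=
        mul_le_mul_of_nonneg_left hsqrt hcoef

end AuxiliaryForWedge

/-- **Proposition 1, wedge part.** For `N ≥ 3`, `r ≥ 2` and `2 ≤ k ≤ N`, the
wedge Cheeger constant of the spider web graph `G_{N,r}` satisfies
`φ_{N,r}(k) ≤ (2r/(2r−1))·√(2(1 − cos(2π⌊k/2⌋/N)))`; that is, there exists a wedge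
partition `S 1, ..., S k` with `max_i Cut(S i)/Volume(S i) ≤ (2r/(2r−1))·√(2λ^C_k)`, where
`λ^C_k = 1 − cos(2π⌊k/2⌋/N)` is the `k`-th eigenvalue of the normalized Laplacian of the
cycle graph on `N` vertices and `⌊·⌋` is integer division. -/
theorem wedgeCheeger_le_sqrt_cycle_eigenvalue (N r k : ℕ)
    (hN : 3 ≤ N) (hr : 2 ≤ r) (hk : 2 ≤ k) (hkN : k ≤ N) :
    wedgeCheeger N r k
      ≤ (2 * (r : ℝ) / (2 * (r : ℝ) - 1)) *
        Real.sqrt (2 * (1 - Real.cos (2 * Real.pi * ((k / 2 : ℕ) : ℝ) / (N : ℝ)))) ∧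
    (∃ S : Fin k → Set (ZMod N × Fin r), IsWedgePartition N r k S ∧
      ∀ i, (cut (spiderWeb N r) (S i) : ℝ) / (volume (spiderWeb N r) (S i) : ℝ)
        ≤ (2 * (r : ℝ) / (2 * (r : ℝ) - 1)) *
          Real.sqrt (2 * (1 - Real.cos (2 * Real.pi * ((k / 2 : ℕ) : ℝ) / (N : ℝ))))) := by
  haveI : NeZero N := ⟨by omega⟩
  haveI : Nonempty (Fin k) := ⟨⟨0, by omega⟩⟩
  set q := N / k with hq
  set rem := N % k with hrem
  have hdm : k * q + rem = N := by rw [hq, hrem]; exact Nat.div_add_mod N k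
  have hremk : rem < k := Nat.mod_lt N (by omega)
  have hq1 : 1 ≤ q := (Nat.one_le_div_iff (by omega)).mpr hkN
  set f : ℕ → ℕ := fun i => i * q + min i rem with hf
  have hf0 : f 0 = 0 := by simp [hf]
  have hfk : f k = N := by simp only [hf]; rw [min_eq_right hremk.le]; omega
  have hstep : ∀ i, f i + q ≤ f (i + 1) ∧ f (i + 1) ≤ f i + q + 1 := by
    intro i
    simp only [hf, Nat.add_mul, Nat.one_mul]
    omega
  have hmono : Monotone f := monotone_nat_of_le_succ (fun i => by have := (hstep i).1; omega)
  have hfle : ∀ i : ℕ, i ≤ k → f i ≤ N := fun i hi => hfk ▸ hmono hi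
  set c : Fin k → ℕ := fun i => f (i.val + 1) - f i.val with hc
  have hcq : ∀ i : Fin k, q ≤ c i ∧ c i ≤ N := by
    intro i
    have h1 := (hstep i.val).1
    have h2 := hfle (i.val + 1) i.isLt
    simp only [hc]
    omega
  set A : Fin k → Set (ZMod N) :=
    fun i => (fun t : ℕ => ((f i.val : ℕ) : ZMod N) + (t : ZMod N)) '' Set.Iio (c i) with hA
  have hAeq : ∀ i : Fin k, A i = (Nat.cast : ℕ → ZMod N) '' Set.Ico (f i.val) (f (i.val + 1)) := by
    intro i
    have h1 := (hstep i.val).1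
    ext x
    simp only [hA, Set.mem_image, Set.mem_Iio, Set.mem_Ico]
    constructor
    · rintro ⟨t, ht, rfl⟩
      exact ⟨f i.val + t, by simp only [hc] at ht; omega, by push_cast; ring⟩
    · rintro ⟨u, ⟨hu1, hu2⟩, rfl⟩
      refine ⟨u - f i.val, by simp only [hc]; omega, ?_⟩
      have hcast : ((u - f i.val : ℕ) : ZMod N) = (u : ZMod N) - (f i.val : ZMod N) := by
        push_cast [Nat.cast_sub hu1]; ring
      rw [hcast]; ring
  have hcastinj : ∀ u v : ℕ, u < N → v < N → (u : ZMod N) = (v : ZMod N) → u = v := by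
    intro u v hu hv h
    rw [← ZMod.val_cast_of_lt hu, ← ZMod.val_cast_of_lt hv, h]
  have hdisj : Pairwise (Function.onFun Disjoint A) := by
    have H : ∀ i j : Fin k, i.val < j.val → Disjoint (A i) (A j) := by
      intro i j hij
      rw [Set.disjoint_left, hAeq i, hAeq j]
      rintro x ⟨u, ⟨hu1, hu2⟩, rfl⟩ ⟨v, ⟨hv1, hv2⟩, hvu⟩
      have huN : u < N := lt_of_lt_of_le hu2 (hfle _ i.isLt)
      have hvN : v < N := lt_of_lt_of_le hv2 (hfle _ j.isLt)
      have := hcastinj v u hvN huN hvu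
      have hij2 : f (i.val + 1) ≤ f j.val := hmono hij
      omega
    intro i j hij
    rcases lt_or_gt_of_ne (fun h => hij (Fin.ext h) : i.val ≠ j.val) with h | h
    · exact H i j h
    · exact (H j i h).symm
  have hunion : (⋃ i, A i) = Set.univ := by
    ext x
    simp only [Set.mem_iUnion, Set.mem_univ, iff_true]
    have hvx : x.val < N := ZMod.val_lt x
    set P : ℕ → Prop := fun i => f i ≤ x.val with hP
    have hP0 : P 0 := by simp [hP, hf0]
    set i0 := Nat.findGreatest P k with hi0
    have hPi0 : P i0 := Nat.findGreatest_spec (Nat.zero_le k) hP0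
    have hi0k : i0 ≤ k := Nat.findGreatest_le k
    have hi0lt : i0 < k := by
      rcases Nat.lt_or_ge i0 k with h | h
      · exact h
      · exfalso
        have hek : i0 = k := le_antisymm hi0k h
        have hcontr : f i0 ≤ x.val := hPi0
        rw [hek, hfk] at hcontr
        omega
    have hnext : x.val < f (i0 + 1) := by
      by_contra hcon
      push_neg at hcon
      have := Nat.le_findGreatest hi0lt (show P (i0 + 1) from hcon)
      omega
    refine ⟨⟨i0, hi0lt⟩, ?_⟩
    rw [hAeq ⟨i0, hi0lt⟩]
    exact ⟨x.val, ⟨hPi0, hnext⟩, ZMod.natCast_zmod_val x⟩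
  set S : Fin k → Set (ZMod N × Fin r) := fun i => A i ×ˢ (Set.univ : Set (Fin r)) with hS
  have hpart : IsWedgePartition N r k S :=
    ⟨A, fun i => ⟨c i, le_trans hq1 (hcq i).1, ⟨((f i.val : ℕ) : ZMod N), rfl⟩⟩,
      hdisj, hunion, fun i => rfl⟩
  have hratio : ∀ i, (cut (spiderWeb N r) (S i) : ℝ) / (volume (spiderWeb N r) (S i) : ℝ)
      ≤ (2 * (r : ℝ) / (2 * (r : ℝ) - 1)) *
        Real.sqrt (2 * (1 - Real.cos (2 * Real.pi * ((k / 2 : ℕ) : ℝ) / (N : ℝ)))) := by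
    intro i
    have hcutb : cut (spiderWeb N r) (S i) ≤ 2 * r :=
      auxW_cut_arc_le hN ((f i.val : ℕ) : ZMod N) (le_trans hq1 (hcq i).1)
    have hvolb : q * (4 * r - 2) ≤ volume (spiderWeb N r) (S i) := by
      calc q * (4 * r - 2) ≤ c i * (4 * r - 2) := Nat.mul_le_mul_right _ (hcq i).1
        _ ≤ _ := auxW_volume_arc_ge hN ((f i.val : ℕ) : ZMod N) (hcq i).2
    exact auxW_arith hN hr hk hkN hq hcutb hvolb
  have hsup : (⨆ i, (cut (spiderWeb N r) (S i) : ℝ) / (volume (spiderWeb N r) (S i) : ℝ))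
      ≤ (2 * (r : ℝ) / (2 * (r : ℝ) - 1)) *
        Real.sqrt (2 * (1 - Real.cos (2 * Real.pi * ((k / 2 : ℕ) : ℝ) / (N : ℝ)))) :=
    ciSup_le hratio
  have hbdd : BddBelow {x : ℝ | ∃ S : Fin k → Set (ZMod N × Fin r), IsWedgePartition N r k S ∧
      x = ⨆ i, (cut (spiderWeb N r) (S i) : ℝ) / (volume (spiderWeb N r) (S i) : ℝ)} := by
    refine ⟨0, ?_⟩
    rintro y ⟨S', -, rfl⟩
    exact Real.iSup_nonneg fun i => by positivity
  have hmem : (⨆ i, (cut (spiderWeb N r) (S i) : ℝ) / (volume (spiderWeb N r) (S i) : ℝ))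
      ∈ {x : ℝ | ∃ S : Fin k → Set (ZMod N × Fin r), IsWedgePartition N r k S ∧
      x = ⨆ i, (cut (spiderWeb N r) (S i) : ℝ) / (volume (spiderWeb N r) (S i) : ℝ)} :=
    ⟨S, hpart, rfl⟩
  exact ⟨le_trans (csInf_le hbdd hmem) hsup, S, hpart, hratio⟩
end
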